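/- arXiv:1101.4999 — 8 statements merged into one kernel-verified Lean document; each statement's English description precedes it below -/
import Mathlib

section
/- Let F be a field and F(X_1,...,X_m) a nonzero polynomial whose leading monomial with respect to a lexicographic ordering is X_1^{i_1}⋯X_m^{i_m}. Let S_1,...,S_m ⊆ F be finite sets with |S_j| = s_j and i_j ≤ s_j for all j. Then the number of zeros of F in S_1 × ... × S_m is at most s_1⋯s_m − (s_1−i_1)(s_2−i_2)⋯(s_m−i_m). -/
private lemma lex_apply_zero_le {n : ℕ} {a b : Fin (n+1) →₀ ℕ}
    (h : toLex a ≤ toLex b) : a 0 ≤ b 0 := by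
  rcases eq_or_lt_of_le h with heq | hlt
  · exact le_of_eq (congrFun (congrArg _ (toLex.injective heq)) 0)
  · obtain ⟨j, hj, hjlt⟩ := Finsupp.lex_def.mp hlt
    rcases eq_or_ne j 0 with rfl | hj0
    · exact hjlt.le
    · exact le_of_eq (hj 0 (Fin.pos_of_ne_zero hj0))

private lemma lex_cons_le {n : ℕ} (d : ℕ) {a b : Fin n →₀ ℕ}
    (h : toLex (Finsupp.cons d a) ≤ toLex (Finsupp.cons d b)) : toLex a ≤ toLex b := by
  rcases eq_or_lt_of_le h with heq | hlt
  · have hab : a = b := by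
      have h2 := toLex.injective heq
      ext j
      have := congrFun (congrArg (fun f : Fin (n+1) →₀ ℕ => ⇑f) h2) j.succ
      simpa [Finsupp.cons_succ] using this
    exact le_of_eq (congrArg toLex hab)
  · obtain ⟨j, hj, hjlt⟩ := Finsupp.lex_def.mp hlt
    rcases Fin.eq_zero_or_eq_succ j with rfl | ⟨j', rfl⟩
    · simp [Finsupp.cons_zero] at hjlt
    · refine le_of_lt (Finsupp.lex_def.mpr ⟨j', fun d' hd' => ?_, ?_⟩)
      · have := hj d'.succ (Fin.succ_lt_succ_iff.mpr hd')
        simpa [Finsupp.cons_succ] using this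
      · simpa [Finsupp.cons_succ] using hjlt

/-- **footprint bound.** If the leading monomial of a nonzero polynomial `f`
with respect to the lexicographic ordering (with `X_m ≺ ⋯ ≺ X_1`) is `X_1^{i_1} ⋯ X_m^{i_m}`
with `i_j ≤ s_j`, then `f` has at most `s_1 ⋯ s_m − (s_1 − i_1) ⋯ (s_m − i_m)` zeros in
`S_1 × ⋯ × S_m`. -/
theorem footprint_bound {F : Type*} [Field F] [DecidableEq F] {m : ℕ}
    (f : MvPolynomial (Fin m) F) (hf : f ≠ 0) (i : Fin m →₀ ℕ)
    (hcoeff : MvPolynomial.coeff i f ≠ 0)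
    (hlead : ∀ j ∈ f.support, toLex j ≤ toLex i)
    (S : Fin m → Finset F) (hi : ∀ j, i j ≤ (S j).card) :
    ((Fintype.piFinset S).filter (fun p => MvPolynomial.eval p f = 0)).card ≤
      ∏ j, (S j).card - ∏ j, ((S j).card - i j) := by
  induction m with
  | zero =>
    have hi0 : i = 0 := Finsupp.ext fun a => a.elim0
    have hne : ∀ p : Fin 0 → F, MvPolynomial.eval p f ≠ 0 := by
      intro p
      have hsupp : f.support = {0} := by
        apply Finset.Subset.antisymm
        · intro j _
          simp only [Finset.mem_singleton]
          exact Finsupp.ext fun a => a.elim0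
        · simpa [Finset.singleton_subset_iff, MvPolynomial.mem_support_iff, ← hi0] using hcoeff
      rw [hi0] at hcoeff
      rw [MvPolynomial.eval_eq, hsupp]
      simpa using hcoeff
    have h0 : ((Fintype.piFinset S).filter (fun p => MvPolynomial.eval p f = 0)).card = 0 :=
      Finset.card_eq_zero.mpr (Finset.filter_eq_empty_iff.mpr fun p _ => hne p)
    rw [h0]
    exact Nat.zero_le _
  | succ n ih =>
    classical
    set d := i 0 with hd
    set i' := Finsupp.tail i with hi'def
    set q := MvPolynomial.finSuccEquiv F n f with hq
    set c := q.coeff d with hcdef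
    set S' : Fin n → Finset F := fun j => S j.succ with hS'
    have hcons : Finsupp.cons d i' = i := Finsupp.cons_tail i
    -- the leading coefficient (in X₀) is nonzero with leading monomial i'
    have hcc : MvPolynomial.coeff i' c ≠ 0 := by
      rw [hcdef, hq, MvPolynomial.finSuccEquiv_coeff_coeff, hcons]
      exact hcoeff
    have hc0 : c ≠ 0 := fun h => hcc (by simp [h])
    have hleadc : ∀ j ∈ c.support, toLex j ≤ toLex i' := by
      intro j hj
      have hmem : Finsupp.cons d j ∈ f.support := by
        rw [hcdef, hq] at hj
        exact MvPolynomial.mem_support_coeff_finSuccEquiv.mp hj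
      have := hlead _ hmem
      rw [← hcons] at this
      exact lex_cons_le d this
    have hi'le : ∀ j, i' j ≤ (S' j).card := by
      intro j
      rw [hi'def, Finsupp.tail_apply]
      exact hi j.succ
    -- q has natDegree ≤ d
    have hqdeg : q.natDegree ≤ d := by
      rw [Polynomial.natDegree_le_iff_coeff_eq_zero]
      intro k hk
      by_contra hkne
      obtain ⟨j', hj'⟩ := MvPolynomial.ne_zero_iff.mp hkne
      have hmem : Finsupp.cons k j' ∈ f.support := by
        rw [hq] at hj'
        exact MvPolynomial.mem_support_coeff_finSuccEquiv.mp
          (MvPolynomial.mem_support_iff.mpr hj')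
      have h1 := lex_apply_zero_le (hlead _ hmem)
      rw [Finsupp.cons_zero] at h1
      omega
    -- fiberwise counting
    set A := (Fintype.piFinset S).filter (fun p => MvPolynomial.eval p f = 0) with hA
    have hcard : A.card = ∑ a' ∈ Fintype.piFinset S',
        (A.filter (fun p => Fin.tail p = a')).card := by
      apply Finset.card_eq_sum_card_fiberwise
      intro p hp
      rw [Finset.mem_coe, Finset.mem_filter] at hp
      rw [Finset.mem_coe, Fintype.mem_piFinset]
      intro j
      exact Fintype.mem_piFinset.mp hp.1 j.succ
    set h : (Fin n → F) → ℕ :=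
      fun a' => ((S 0).filter (fun x => MvPolynomial.eval (Fin.cons x a') f = 0)).card with hh
    have hfiber : ∀ a' ∈ Fintype.piFinset S',
        (A.filter (fun p => Fin.tail p = a')).card ≤ h a' := by
      intro a' _
      apply Finset.card_le_card_of_injOn (fun p => p 0)
      · intro p hp
        rw [Finset.mem_coe, Finset.mem_filter] at hp
        obtain ⟨hpA, hp3⟩ := hp
        rw [hA, Finset.mem_filter] at hpA
        obtain ⟨hp1, hp2⟩ := hpA
        rw [Finset.mem_coe, Finset.mem_filter]
        constructor
        · exact Fintype.mem_piFinset.mp hp1 0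
        · rw [← hp3, Fin.cons_self_tail]
          exact hp2
      · intro p hp p' hp' hpp
        simp only [Finset.mem_coe, Finset.mem_filter] at hp hp'
        have : Fin.tail p = Fin.tail p' := hp.2.trans hp'.2.symm
        funext j
        rcases Fin.eq_zero_or_eq_succ j with rfl | ⟨j', rfl⟩
        · exact hpp
        · exact congrFun this j'
    -- bound on each fiber
    set Z := (Fintype.piFinset S').filter (fun a' => MvPolynomial.eval a' c = 0) with hZ
    have hbound : ∀ a' ∈ Fintype.piFinset S', a' ∉ Z → h a' ≤ d := by
      intro a' ha' haZ
      have hcne : MvPolynomial.eval a' c ≠ 0 := by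
        intro h0
        exact haZ (Finset.mem_filter.mpr ⟨ha', h0⟩)
      set g : Polynomial F := q.map (MvPolynomial.eval a') with hg
      have hgc : g.coeff d ≠ 0 := by
        rw [hg, Polynomial.coeff_map]
        exact hcne
      have hg0 : g ≠ 0 := fun h0 => hgc (by simp [h0])
      have hgdeg : g.natDegree ≤ d := le_trans Polynomial.natDegree_map_le hqdeg
      have hsub : (S 0).filter (fun x => MvPolynomial.eval (Fin.cons x a') f = 0)
          ⊆ g.roots.toFinset := by
        intro x hx
        rw [Finset.mem_filter] at hx
        rw [Multiset.mem_toFinset, Polynomial.mem_roots hg0]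
        have := hx.2
        rw [MvPolynomial.eval_eq_eval_mv_eval'] at this
        exact this
      calc h a' ≤ g.roots.toFinset.card := Finset.card_le_card hsub
        _ ≤ Multiset.card g.roots := Multiset.toFinset_card_le _
        _ ≤ g.natDegree := Polynomial.card_roots' g
        _ ≤ d := hgdeg
    have hboundZ : ∀ a', h a' ≤ (S 0).card := fun a' => Finset.card_filter_le _ _
    -- apply induction hypothesis to c
    have hNbound : Z.card ≤ ∏ j, (S' j).card - ∏ j, ((S' j).card - i' j) :=
      ih c hc0 i' hcc hleadc S' hi'le
    -- arithmetic
    set s0 := (S 0).card with hs0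
    set T := ∏ j, (S' j).card with hT
    set P := ∏ j, ((S' j).card - i' j) with hP
    set N := Z.card with hN
    have hds0 : d ≤ s0 := hi 0
    have hPT : P ≤ T := Finset.prod_le_prod' fun j _ => Nat.sub_le _ _
    have hNT : N ≤ T := by
      rw [hN, hT, ← Fintype.card_piFinset]
      exact Finset.card_le_card (Finset.filter_subset _ _)
    have hsum : ∑ a' ∈ Fintype.piFinset S', h a' ≤ N * s0 + (T - N) * d := by
      rw [← Finset.sum_filter_add_sum_filter_not (Fintype.piFinset S')
        (fun a' => a' ∈ Z)]
      have hZeq : (Fintype.piFinset S').filter (fun a' => a' ∈ Z) = Z := by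
        ext a'
        constructor
        · intro ha'
          exact (Finset.mem_filter.mp ha').2
        · intro ha'
          have ha2 : a' ∈ Fintype.piFinset S' := by
            rw [hZ] at ha'
            exact Finset.mem_of_mem_filter a' ha'
          exact Finset.mem_filter.mpr ⟨ha2, ha'⟩
      have h1 : ∑ a' ∈ (Fintype.piFinset S').filter (fun a' => a' ∈ Z), h a' ≤ N * s0 := by
        rw [hZeq]
        calc ∑ a' ∈ Z, h a' ≤ ∑ _a' ∈ Z, s0 :=
              Finset.sum_le_sum fun a' _ => hboundZ a'
          _ = N * s0 := by rw [Finset.sum_const, smul_eq_mul]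
      have h2 : ∑ a' ∈ (Fintype.piFinset S').filter (fun a' => a' ∉ Z), h a'
          ≤ (T - N) * d := by
        have hc2 : ((Fintype.piFinset S').filter (fun a' => a' ∉ Z)).card = T - N := by
          rw [Finset.filter_not, Finset.card_sdiff_of_subset]
          · rw [Fintype.card_piFinset, hZeq]
          · rw [hZeq]; exact Finset.filter_subset _ _
        calc ∑ a' ∈ (Fintype.piFinset S').filter (fun a' => a' ∉ Z), h a'
            ≤ ∑ a' ∈ (Fintype.piFinset S').filter (fun a' => a' ∉ Z), d :=
              Finset.sum_le_sum fun a' ha' => by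
                rw [Finset.mem_filter] at ha'
                exact hbound a' ha'.1 ha'.2
          _ = (T - N) * d := by rw [Finset.sum_const, smul_eq_mul, hc2]
      exact add_le_add h1 h2
    have htotal : A.card ≤ N * s0 + (T - N) * d := by
      rw [hcard]
      exact le_trans (Finset.sum_le_sum hfiber) hsum
    have hrhs0 : ∏ j : Fin (n+1), (S j).card = s0 * T := by
      rw [hT, hs0, Fin.prod_univ_succ]
    have hrhs1 : ∏ j : Fin (n+1), ((S j).card - i j) = (s0 - d) * P := by
      rw [hP, Fin.prod_univ_succ]
      refine congrArg₂ (· * ·) rfl (Finset.prod_congr rfl fun j _ => ?_)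
      rw [hi'def, Finsupp.tail_apply]
    rw [hrhs0, hrhs1]
    -- final arithmetic: N*s0 + (T-N)*d ≤ s0*T - (s0-d)*P
    have key : N * s0 + (T - N) * d ≤ s0 * T - (s0 - d) * P := by
      have hsd : (s0 - d) * P ≤ s0 * T := Nat.mul_le_mul (Nat.sub_le _ _) hPT
      zify [hds0, hNT, hPT, hsd] at hNbound ⊢
      nlinarith [mul_nonneg (by linarith : (0:ℤ) ≤ (s0:ℤ) - d)
        (by linarith : (0:ℤ) ≤ (T:ℤ) - P - N)]
    exact le_trans htotal key
end

section
/- Let F be a field and F(X_1,...,X_m) a nonzero polynomial with leading monomial X_1^{i_1}⋯X_m^{i_m} with respect to a lexicographic ordering. For finite sets S_1,...,S_m ⊆ F with |S_j| = s_j, the number of zeros of F in S_1 × ... × S_m is at most i_1 s_2⋯s_m + s_1 i_2 s_3⋯s_m + ... + s_1⋯s_{m−1} i_m. -/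
open Finset MvPolynomial

lemma lex_le_head {m : ℕ} {j i : Fin (m+1) →₀ ℕ} (h : toLex j ≤ toLex i) : j 0 ≤ i 0 := by
  rcases h.lt_or_eq with hlt | heq
  · obtain ⟨k, hk, hk2⟩ := hlt
    rcases eq_or_lt_of_le (Fin.zero_le k) with rfl | h0
    · exact hk2.le
    · exact (hk 0 h0).le
  · exact le_of_eq (DFunLike.congr_fun (toLex.injective heq) 0)

lemma lex_le_tail {m : ℕ} {j i : Fin m →₀ ℕ} {a : ℕ}
    (h : toLex (Finsupp.cons a j) ≤ toLex (Finsupp.cons a i)) : toLex j ≤ toLex i := by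
  rcases h.lt_or_eq with hlt | heq
  · obtain ⟨k, hk, hk2⟩ := hlt
    rcases Fin.eq_zero_or_eq_succ k with rfl | ⟨k', rfl⟩
    · simp [Finsupp.cons_zero] at hk2
    · refine le_of_lt ⟨k', fun d hd => ?_, ?_⟩
      · have := hk d.succ (Fin.succ_lt_succ_iff.mpr hd)
        simpa [Finsupp.cons_succ] using this
      · simpa [Finsupp.cons_succ] using hk2
  · have := toLex.injective heq
    have : j = i := by
      ext x
      have := DFunLike.congr_fun this x.succ
      simpa [Finsupp.cons_succ] using this
    exact le_of_eq (congrArg _ this)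

lemma erase_zero_univ {m : ℕ} :
    (univ : Finset (Fin (m+1))).erase 0 = univ.map (Fin.succEmb m) := by
  rw [← Fin.Ioi_zero_eq_map]
  ext x
  simp [Fin.pos_iff_ne_zero]

lemma sz_aux {F : Type*} [Field F] [DecidableEq F] : ∀ (m : ℕ)
    (f : MvPolynomial (Fin m) F) (i : Fin m →₀ ℕ),
    MvPolynomial.coeff i f ≠ 0 →
    (∀ j ∈ f.support, toLex j ≤ toLex i) →
    ∀ (S : Fin m → Finset F),
    ((Fintype.piFinset S).filter (fun p => MvPolynomial.eval p f = 0)).card ≤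
      ∑ j, i j * ∏ l ∈ Finset.univ.erase j, (S l).card := by
  intro m
  induction m with
  | zero =>
    intro f i hcoeff hlead S
    have hf : f ≠ 0 := fun h => hcoeff (by simp [h])
    have h0 : (Fintype.piFinset S).filter (fun p => MvPolynomial.eval p f = 0) = ∅ := by
      refine Finset.filter_false_of_mem (fun p _ => ?_)
      rw [MvPolynomial.eq_C_of_isEmpty f] at hf ⊢
      simp only [eval_C]
      simpa using hf
    rw [h0]
    simp
  | succ m ih =>
    intro f i hcoeff hlead S
    set q := finSuccEquiv F m f with hq
    set d := i 0 with hd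
    set i' := Finsupp.tail i with hi'
    set g := q.coeff d with hg
    have hconsi : Finsupp.cons d i' = i := Finsupp.cons_tail i
    -- leading coefficient facts
    have hgcoeff : MvPolynomial.coeff i' g ≠ 0 := by
      rw [hg, hq, finSuccEquiv_coeff_coeff, hconsi]; exact hcoeff
    have hglead : ∀ j' ∈ g.support, toLex j' ≤ toLex i' := by
      intro j' hj'
      have hmem : Finsupp.cons d j' ∈ f.support := mem_support_coeff_finSuccEquiv.mp hj'
      have h2 : toLex (Finsupp.cons d j') ≤ toLex (Finsupp.cons d i') := by
        rw [hconsi]; exact hlead _ hmem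
      exact lex_le_tail h2
    -- degree bound on q
    have hqdeg : ∀ k, d < k → q.coeff k = 0 := by
      intro k hk
      by_contra h
      obtain ⟨j', hj'⟩ := MvPolynomial.ne_zero_iff.mp h
      have hmem : Finsupp.cons k j' ∈ f.support :=
        mem_support_coeff_finSuccEquiv.mp (MvPolynomial.mem_support_iff.mpr hj')
      have h2 : toLex (Finsupp.cons k j') ≤ toLex (Finsupp.cons d i') := by
        rw [hconsi]; exact hlead _ hmem
      have h3 := lex_le_head h2
      simp only [Finsupp.cons_zero] at h3
      exact absurd h3 (not_le.mpr hk)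
    have hqnat : q.natDegree ≤ d := Polynomial.natDegree_le_iff_coeff_eq_zero.mpr hqdeg
    -- setup tail sets
    set S' : Fin m → Finset F := fun k => S k.succ with hS'
    set T := Fintype.piFinset S' with hT
    -- fiberwise counting over tails
    have hcount : ((Fintype.piFinset S).filter (fun p => MvPolynomial.eval p f = 0)).card =
        ∑ t ∈ T, ((S 0).filter (fun x => MvPolynomial.eval (Fin.cons x t) f = 0)).card := by
      have H : ∀ p ∈ (Fintype.piFinset S).filter (fun p => MvPolynomial.eval p f = 0),
          Fin.tail p ∈ T := by
        intro p hp
        simp only [Finset.mem_filter, Fintype.mem_piFinset] at hp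
        exact Fintype.mem_piFinset.mpr (fun k => hp.1 k.succ)
      rw [Finset.card_eq_sum_card_fiberwise H]
      refine Finset.sum_congr rfl (fun t ht => ?_)
      refine Finset.card_bij' (fun p _ => p 0) (fun x _ => Fin.cons x t) ?_ ?_ ?_ ?_
      · intro p hp
        simp only [Finset.mem_filter, Fintype.mem_piFinset] at hp
        obtain ⟨⟨h1, h2⟩, h3⟩ := hp
        have hpc : Fin.cons (p 0) t = p := by rw [← h3]; exact Fin.cons_self_tail p
        simp only [Finset.mem_filter]
        exact ⟨h1 0, by rw [hpc]; exact h2⟩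
      · intro x hx
        simp only [Finset.mem_filter] at hx
        simp only [Finset.mem_filter, Fintype.mem_piFinset]
        refine ⟨⟨?_, hx.2⟩, ?_⟩
        · intro k
          rcases Fin.eq_zero_or_eq_succ k with rfl | ⟨k', rfl⟩
          · simpa using hx.1
          · simp only [Fin.cons_succ]
            exact Fintype.mem_piFinset.mp ht k'
        · simp [Fin.tail_cons]
      · intro p hp
        simp only [Finset.mem_filter] at hp
        obtain ⟨hp1, hp2⟩ := hp
        subst hp2
        exact Fin.cons_self_tail p
      · intro x hx
        simp
    rw [hcount]
    -- pointwise bounds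
    have hbound : ∀ t ∈ T,
        ((S 0).filter (fun x => MvPolynomial.eval (Fin.cons x t) f = 0)).card ≤
          if MvPolynomial.eval t g = 0 then (S 0).card else d := by
      intro t _
      split_ifs with hgt
      · exact Finset.card_le_card (Finset.filter_subset _ _)
      · set qt := q.map (MvPolynomial.eval t) with hqt
        have hqt0 : qt ≠ 0 := by
          intro h
          apply hgt
          have := congrArg (fun r => Polynomial.coeff r d) h
          simpa [hqt, Polynomial.coeff_map] using this
        have hqtdeg : qt.natDegree ≤ d := le_trans Polynomial.natDegree_map_le hqnat
        calc ((S 0).filter (fun x => MvPolynomial.eval (Fin.cons x t) f = 0)).card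
            ≤ qt.roots.toFinset.card := by
              apply Finset.card_le_card
              intro x hx
              simp only [Finset.mem_filter] at hx
              rw [Multiset.mem_toFinset, Polynomial.mem_roots hqt0]
              have := hx.2
              rw [eval_eq_eval_mv_eval'] at this
              exact this
          _ ≤ Multiset.card qt.roots := qt.roots.toFinset_card_le
          _ ≤ qt.natDegree := Polynomial.card_roots' qt
          _ ≤ d := hqtdeg
    -- split sum into bad and good tails
    have hbad := ih g i' hgcoeff hglead S'
    have hsplit : ∑ t ∈ T, ((S 0).filter (fun x => MvPolynomial.eval (Fin.cons x t) f = 0)).card ≤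
        (T.filter (fun t => MvPolynomial.eval t g = 0)).card * (S 0).card + T.card * d := by
      calc ∑ t ∈ T, ((S 0).filter (fun x => MvPolynomial.eval (Fin.cons x t) f = 0)).card
          ≤ ∑ t ∈ T, if MvPolynomial.eval t g = 0 then (S 0).card else d :=
            Finset.sum_le_sum hbound
        _ = (T.filter (fun t => MvPolynomial.eval t g = 0)).card * (S 0).card +
            (T.filter (fun t => ¬ MvPolynomial.eval t g = 0)).card * d := by
            rw [Finset.sum_ite, Finset.sum_const, Finset.sum_const, smul_eq_mul, smul_eq_mul]
        _ ≤ (T.filter (fun t => MvPolynomial.eval t g = 0)).card * (S 0).card + T.card * d := by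
            refine Nat.add_le_add le_rfl (Nat.mul_le_mul ?_ le_rfl)
            exact Finset.card_le_card (Finset.filter_subset _ _)
    refine le_trans hsplit ?_
    -- arithmetic: rewrite RHS
    have hTcard : T.card = ∏ l ∈ (univ : Finset (Fin (m+1))).erase 0, (S l).card := by
      rw [erase_zero_univ, Finset.prod_map]
      simp [hT, Fintype.card_piFinset, hS', Fin.succEmb]
    have hRHS : ∑ j, i j * ∏ l ∈ Finset.univ.erase j, (S l).card =
        d * ∏ l ∈ (univ : Finset (Fin (m+1))).erase 0, (S l).card +
        ∑ j' : Fin m, i' j' * ((S 0).card * ∏ l ∈ (univ : Finset (Fin m)).erase j', (S' l).card) := by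
      rw [Fin.sum_univ_succ]
      congr 1
      refine Finset.sum_congr rfl (fun j' _ => ?_)
      have herase : (univ : Finset (Fin (m+1))).erase j'.succ =
          insert 0 (((univ : Finset (Fin m)).erase j').map (Fin.succEmb m)) := by
        ext x
        rcases Fin.eq_zero_or_eq_succ x with rfl | ⟨y, rfl⟩
        · simp [(Fin.succ_ne_zero j').symm]
        · simp [Fin.succ_ne_zero, Fin.succ_inj]
      rw [herase, Finset.prod_insert (by simp [Fin.succ_ne_zero]), Finset.prod_map]
      simp [hi', Finsupp.tail_apply, hS', Fin.succEmb]
    rw [hRHS, add_comm]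
    refine Nat.add_le_add ?_ ?_
    · exact le_of_eq (by rw [hTcard, Nat.mul_comm])
    · calc (T.filter (fun t => MvPolynomial.eval t g = 0)).card * (S 0).card
          ≤ (∑ j' : Fin m, i' j' * ∏ l ∈ (univ : Finset (Fin m)).erase j', (S' l).card) *
            (S 0).card := Nat.mul_le_mul hbad le_rfl
        _ = ∑ j' : Fin m, i' j' * ((S 0).card * ∏ l ∈ (univ : Finset (Fin m)).erase j', (S' l).card) := by
            rw [Finset.sum_mul]
            exact Finset.sum_congr rfl (fun j' _ => by ring)



/-- **Schwartz–Zippel via the leading monomial.** If the leading monomial of a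
nonzero polynomial `f` with respect to the lexicographic ordering (with `X_m ≺ ⋯ ≺ X_1`) is
`X_1^{i_1} ⋯ X_m^{i_m}`, then the number of zeros of `f` in `S_1 × ⋯ × S_m` is at most
`i_1 s_2 ⋯ s_m + s_1 i_2 s_3 ⋯ s_m + ⋯ + s_1 ⋯ s_{m−1} i_m`. -/
theorem schwartz_zippel_leading_monomial {F : Type*} [Field F] [DecidableEq F] {m : ℕ}
    (f : MvPolynomial (Fin m) F) (hf : f ≠ 0) (i : Fin m →₀ ℕ)
    (hcoeff : MvPolynomial.coeff i f ≠ 0)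
    (hlead : ∀ j ∈ f.support, toLex j ≤ toLex i)
    (S : Fin m → Finset F) :
    ((Fintype.piFinset S).filter (fun p => MvPolynomial.eval p f = 0)).card ≤
      ∑ j, i j * ∏ l ∈ Finset.univ.erase j, (S l).card :=
  sz_aux m f i hcoeff hlead S
end

section
/- The minimum distance of the affine variety code E(M,S) is at least min{(s_1−i_1)(s_2−i_2)⋯(s_m−i_m) : X_1^{i_1}⋯X_m^{i_m} ∈ M}. -/
open MvPolynomial Finset

private lemma one_var_count {F : Type*} [Field F] [DecidableEq F]
    (p : Polynomial F) (hp : p ≠ 0) (T : Finset F) :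
    T.card - p.natDegree ≤ (T.filter (fun x => p.eval x ≠ 0)).card := by
  have hZ : (T.filter (fun x => p.eval x = 0)).card ≤ p.natDegree := by
    have hsub : T.filter (fun x => p.eval x = 0) ⊆ p.roots.toFinset := by
      intro x hx
      simp only [mem_filter] at hx
      simp [Multiset.mem_toFinset, Polynomial.mem_roots, hp, hx.2]
    calc (T.filter (fun x => p.eval x = 0)).card ≤ p.roots.toFinset.card :=
          Finset.card_le_card hsub
      _ ≤ Multiset.card p.roots := p.roots.toFinset_card_le
      _ ≤ p.natDegree := p.card_roots'
  have := Finset.card_filter_add_card_filter_not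
    (s := T) (p := fun x => p.eval x = 0)
  simp only [ne_eq]
  omega

private lemma footprint {F : Type*} [Field F] [DecidableEq F] :
    ∀ (m : ℕ) (S : Fin m → Finset F) (f : MvPolynomial (Fin m) F), f ≠ 0 →
    ∃ i ∈ f.support, ∏ j, ((S j).card - i j) ≤
      ((Fintype.piFinset S).filter (fun p => MvPolynomial.eval p f ≠ 0)).card := by
  intro m
  induction m with
  | zero =>
    intro S f hf
    obtain ⟨i, hi⟩ := (MvPolynomial.support_nonempty (p := f)).2 hf
    refine ⟨i, hi, ?_⟩
    simp only [Finset.univ_eq_empty, Finset.prod_empty]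
    have hone : ∀ p : Fin 0 → F, p ∈ Fintype.piFinset S := by
      intro p
      simp only [Fintype.mem_piFinset]
      exact fun j => j.elim0
    refine Finset.card_pos.2 ⟨(fun j => j.elim0), ?_⟩
    simp only [Finset.mem_filter]
    refine ⟨hone _, ?_⟩
    intro h0
    apply hf
    have : f = MvPolynomial.C (MvPolynomial.eval (fun j : Fin 0 => j.elim0) f) := by
      apply (MvPolynomial.isEmptyRingEquiv F (Fin 0)).injective
      simp [MvPolynomial.isEmptyRingEquiv_apply]
      rw [MvPolynomial.eq_C_of_isEmpty f]; simp
    rw [this, h0, map_zero]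
  | succ n IH =>
    intro S f hf
    set q := finSuccEquiv F n f with hq_def
    have hq : q ≠ 0 := by
      simpa [hq_def] using (map_ne_zero_iff _ (finSuccEquiv F n).injective).2 hf
    set d := q.natDegree with hd_def
    set g := q.leadingCoeff with hg_def
    have hg : g ≠ 0 := Polynomial.leadingCoeff_ne_zero.2 hq
    obtain ⟨i', hi', hbound⟩ := IH (fun j => S j.succ) g hg
    set T' := (Fintype.piFinset (fun j => S j.succ)).filter
      (fun p => MvPolynomial.eval p g ≠ 0) with hT'_def
    refine ⟨Finsupp.cons d i', ?_, ?_⟩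
    · rw [MvPolynomial.mem_support_iff, ← finSuccEquiv_coeff_coeff]
      rw [MvPolynomial.mem_support_iff] at hi'
      simpa [hq_def, hd_def, Polynomial.coeff_natDegree] using hi'
    · -- the big set
      set B := T'.biUnion (fun p' =>
        ((S 0).filter (fun x => MvPolynomial.eval (Fin.cons x p') f ≠ 0)).image
          (fun x => (Fin.cons x p' : Fin (n+1) → F))) with hB_def
      have hBsub : B ⊆ (Fintype.piFinset S).filter
          (fun p => MvPolynomial.eval p f ≠ 0) := by
        intro p hp
        simp only [hB_def, Finset.mem_biUnion, Finset.mem_image, Finset.mem_filter,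
          hT'_def, Fintype.mem_piFinset] at hp
        obtain ⟨p', ⟨hp'1, _⟩, x, ⟨hx1, hx2⟩, rfl⟩ := hp
        simp only [Finset.mem_filter, Fintype.mem_piFinset]
        refine ⟨?_, hx2⟩
        intro j
        refine Fin.cases ?_ ?_ j
        · simpa using hx1
        · intro k; simpa using hp'1 k
      have hBcard : ∑ p' ∈ T',
          ((S 0).filter (fun x => MvPolynomial.eval (Fin.cons x p') f ≠ 0)).card
          = B.card := by
        rw [hB_def, Finset.card_biUnion, ]
        · refine Finset.sum_congr rfl (fun p' _ => ?_)
          rw [Finset.card_image_of_injective]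
          intro a b hab
          have := congrArg (fun v => v 0) hab
          simpa using this
        · intro a ha b hb hab
          simp only [Finset.disjoint_left]
          intro p hp hp2
          simp only [Finset.mem_image] at hp hp2
          obtain ⟨x, _, rfl⟩ := hp
          obtain ⟨y, _, h2⟩ := hp2
          apply hab
          have := congrArg Fin.tail h2
          simpa [Fin.tail_cons] using this.symm
      have hfiber : ∀ p' ∈ T', (S 0).card - d ≤
          ((S 0).filter (fun x => MvPolynomial.eval (Fin.cons x p') f ≠ 0)).card := by
        intro p' hp'
        have hp'g : MvPolynomial.eval p' g ≠ 0 := by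
          simp only [hT'_def, Finset.mem_filter] at hp'; exact hp'.2
        set qp := q.map (MvPolynomial.eval p') with hqp_def
        have hqpcoeff : qp.coeff d = MvPolynomial.eval p' g := by
          simp [hqp_def, Polynomial.coeff_map, hg_def, hd_def, Polynomial.coeff_natDegree]
        have hqpne : qp ≠ 0 := fun h => hp'g (by rw [← hqpcoeff, h]; simp)
        have hdeg : qp.natDegree ≤ d := Polynomial.natDegree_map_le
        have heval : ∀ x, MvPolynomial.eval (Fin.cons x p') f = qp.eval x := by
          intro x; rw [eval_eq_eval_mv_eval']
        calc (S 0).card - d ≤ (S 0).card - qp.natDegree := by omega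
          _ ≤ ((S 0).filter (fun x => qp.eval x ≠ 0)).card := one_var_count qp hqpne _
          _ = ((S 0).filter (fun x => MvPolynomial.eval (Fin.cons x p') f ≠ 0)).card := by
              apply Finset.card_bij (fun x _ => x) <;> simp_all
      calc ∏ j, ((S j).card - (Finsupp.cons d i') j)
          = ((S 0).card - d) * ∏ j : Fin n, ((S j.succ).card - i' j) := by
            rw [Fin.prod_univ_succ]
            simp [Finsupp.cons_zero, Finsupp.cons_succ]
        _ ≤ ((S 0).card - d) * T'.card := by
            exact Nat.mul_le_mul_left _ hbound
        _ = ∑ _p' ∈ T', ((S 0).card - d) := by rw [Finset.sum_const, mul_comm]; rfl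
        _ ≤ ∑ p' ∈ T',
            ((S 0).filter (fun x => MvPolynomial.eval (Fin.cons x p') f ≠ 0)).card :=
            Finset.sum_le_sum hfiber
        _ = B.card := hBcard
        _ ≤ _ := Finset.card_le_card hBsub

/-- The minimum distance of the affine variety code `E(𝕄, S)` is at least
`min{(s_1 − i_1) ⋯ (s_m − i_m) : X_1^{i_1} ⋯ X_m^{i_m} ∈ 𝕄}`: every nonzero codeword has
Hamming weight at least this number. -/
theorem affine_variety_code_min_distance_lower_bound {F : Type*} [Field F] [Fintype F]
    [DecidableEq F] {m : ℕ} (S : Fin m → Finset F) (M : Finset (Fin m →₀ ℕ))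
    (hMne : M.Nonempty) (hM : ∀ i ∈ M, ∀ j, i j < (S j).card) :
    ∀ c ∈ Submodule.span F
        ((fun (i : Fin m →₀ ℕ) (p : {p : Fin m → F // p ∈ Fintype.piFinset S}) =>
            MvPolynomial.eval (p : Fin m → F) (MvPolynomial.monomial i (1 : F))) '' M),
      c ≠ 0 → M.inf' hMne (fun i => ∏ j, ((S j).card - i j)) ≤ hammingNorm c := by
  intro c hc hcne
  -- the evaluation linear map
  let ev : MvPolynomial (Fin m) F →ₗ[F] ({p : Fin m → F // p ∈ Fintype.piFinset S} → F) :=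
    { toFun := fun f p => MvPolynomial.eval (p : Fin m → F) f
      map_add' := fun f g => by funext p; simp
      map_smul' := fun a f => by funext p; simp [MvPolynomial.smul_eval] }
  have himg : ((fun (i : Fin m →₀ ℕ) (p : {p : Fin m → F // p ∈ Fintype.piFinset S}) =>
      MvPolynomial.eval (p : Fin m → F) (MvPolynomial.monomial i (1 : F))) '' M)
      = ev '' ((fun i => MvPolynomial.monomial i (1 : F)) '' (M : Set (Fin m →₀ ℕ))) := by
    rw [← Set.image_comp]; rfl
  rw [himg, Submodule.span_image] at hc
  obtain ⟨f, hfmem, hfc⟩ := hc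
  -- support of f is contained in M
  have hsupp : ∀ f' ∈ Submodule.span F
      ((fun i => MvPolynomial.monomial i (1 : F)) '' (M : Set (Fin m →₀ ℕ))),
      (f' : MvPolynomial (Fin m) F).support ⊆ M := by
    intro f' hf'
    induction hf' using Submodule.span_induction with
    | mem x hx =>
      obtain ⟨i, hi, rfl⟩ := hx
      intro j hj
      rw [MvPolynomial.support_monomial] at hj
      simp only [if_neg (one_ne_zero : (1:F) ≠ 0)] at hj
      simp only [Finset.mem_singleton] at hj
      subst hj; exact hi
    | zero => simp
    | add x y _ _ hx hy =>
      exact (MvPolynomial.support_add).trans (Finset.union_subset hx hy)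
    | smul a x _ hx => exact (MvPolynomial.support_smul).trans hx
  have hfne : f ≠ 0 := by
    intro h; apply hcne; rw [← hfc, h, map_zero]
  obtain ⟨i, hi, hbound⟩ := footprint m S f hfne
  have hiM : i ∈ M := hsupp f hfmem hi
  refine le_trans (Finset.inf'_le _ hiM) ?_
  refine le_trans hbound ?_
  -- hammingNorm c equals the filter card
  have : hammingNorm c = ((Fintype.piFinset S).filter
      (fun p => MvPolynomial.eval p f ≠ 0)).card := by
    unfold hammingNorm
    refine Finset.card_bij (fun p _ => (p : Fin m → F)) ?_ ?_ ?_
    · intro p hp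
      simp only [Finset.mem_filter] at hp ⊢
      refine ⟨p.2, ?_⟩
      have := hp.2
      rw [← hfc] at this
      exact this
    · intro a ha b hb hab; exact Subtype.ext hab
    · intro p hp
      simp only [Finset.mem_filter] at hp
      refine ⟨⟨p, hp.1⟩, ?_, rfl⟩
      simp only [Finset.mem_filter, Finset.mem_univ, true_and]
      rw [← hfc]
      exact hp.2
  omega
end

section
/- Let F be a field and F(X) ∈ F[X_1,...,X_m] nonzero with leading monomial X_1^{i_1}⋯X_m^{i_m} with respect to a lexicographic ordering. For finite sets S_1,...,S_m ⊆ F with |S_j| = s_j, the sum over all points a ∈ S_1 × ... × S_m of mult(F, a) is at most i_1 s_2⋯s_m + s_1 i_2 s_3⋯s_m + ... + s_1⋯s_{m−1} i_m, where mult(F,a) is the multiplicity of F at a defined via Hasse derivatives. -/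
/-- The `k`-th Hasse derivative of a multivariate polynomial `f`: the coefficient of
`T^k` in `f(X + T)`. -/
noncomputable def hasseDeriv {F : Type*} [CommRing F] {m : ℕ} (k : Fin m →₀ ℕ)
    (f : MvPolynomial (Fin m) F) : MvPolynomial (Fin m) F :=
  MvPolynomial.coeff k
    (MvPolynomial.eval₂ (MvPolynomial.C.comp MvPolynomial.C)
      (fun j => MvPolynomial.X j + MvPolynomial.C (MvPolynomial.X j)) f)

/-- `f` has multiplicity at least `r` at the point `a`: all Hasse derivatives of total
order `< r` vanish at `a`. -/
def HasMultAtLeast {F : Type*} [CommRing F] {m : ℕ} (f : MvPolynomial (Fin m) F)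
    (a : Fin m → F) (r : ℕ) : Prop :=
  ∀ k : Fin m →₀ ℕ, (∑ j, k j) < r → MvPolynomial.eval a (hasseDeriv k f) = 0

/-- The multiplicity of `f` at `a`: the largest `r` such that all Hasse derivatives of `f`
of total order `< r` vanish at `a`. -/
noncomputable def multAt {F : Type*} [CommRing F] {m : ℕ} (f : MvPolynomial (Fin m) F)
    (a : Fin m → F) : ℕ :=
  sSup {r | HasMultAtLeast f a r}

namespace SumMultAux

open MvPolynomial

section CommRingPart

variable {F : Type*} [CommRing F] {m : ℕ}

lemma coeff_pow_X_add_C (a : Fin m) (e : ℕ) (u : Fin m →₀ ℕ) :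
    MvPolynomial.coeff u ((X a + C (X a)) ^ e : MvPolynomial (Fin m) (MvPolynomial (Fin m) F)) =
      if u = Finsupp.single a (u a) then
        (e.choose (u a) : MvPolynomial (Fin m) F) * X a ^ (e - u a) else 0 := by
  rw [add_pow]
  have hterm : ∀ t : ℕ,
      ((X a : MvPolynomial (Fin m) (MvPolynomial (Fin m) F)) ^ t * C (X a) ^ (e - t) *
        (e.choose t : MvPolynomial (Fin m) (MvPolynomial (Fin m) F))) =
      monomial (Finsupp.single a t) ((e.choose t : MvPolynomial (Fin m) F) * X a ^ (e - t)) := by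
    intro t
    rw [X_pow_eq_monomial, ← map_pow C (X a), ← map_natCast (C : MvPolynomial (Fin m) F →+* _),
      mul_assoc, ← map_mul, mul_comm ((monomial (Finsupp.single a t)) (1 : MvPolynomial (Fin m) F)),
      C_mul_monomial, mul_one]
    congr 1
    ring
  simp_rw [hterm, coeff_sum, coeff_monomial]
  by_cases hu : u = Finsupp.single a (u a)
  · rw [if_pos hu, Finset.sum_eq_single (u a)]
    · rw [if_pos hu.symm]
    · intro t _ ht
      rw [if_neg]
      intro h
      apply ht
      simpa using congrArg (fun v => v a) h
    · intro h
      simp only [Finset.mem_range, not_lt] at h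
      rw [if_pos hu.symm, Nat.choose_eq_zero_of_lt (by omega), Nat.cast_zero, zero_mul]
  · rw [if_neg hu]
    apply Finset.sum_eq_zero
    intro t _
    rw [if_neg]
    intro h
    apply hu
    have ht : t = u a := by simpa using congrArg (fun v => v a) h
    rw [← h, ht]
    simp

lemma coeff_prod (j k : Fin m →₀ ℕ) :
    MvPolynomial.coeff k (j.prod fun i e =>
        ((X i + C (X i)) ^ e : MvPolynomial (Fin m) (MvPolynomial (Fin m) F))) =
      monomial (j - k) (((∏ i, (j i).choose (k i) : ℕ) : F)) := by
  induction j using Finsupp.induction generalizing k with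
  | zero =>
    rw [Finsupp.prod_zero_index, MvPolynomial.coeff_one]
    by_cases hk : k = 0
    · subst hk; simp
    · rw [if_neg (Ne.symm hk)]
      obtain ⟨i, hi⟩ : ∃ i, k i ≠ 0 := by
        by_contra h; push_neg at h; exact hk (Finsupp.ext h)
      rw [Finset.prod_eq_zero (Finset.mem_univ i)
        (by simpa using Nat.choose_eq_zero_of_lt (Nat.pos_of_ne_zero hi))]
      simp
  | single_add a e j' hasupp he ih =>
    rw [Finsupp.prod_add_index' (fun i => pow_zero _) (fun i e₁ e₂ => pow_add _ _ _),
      Finsupp.prod_single_index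
        (h := fun i e => ((X i + C (X i) : MvPolynomial (Fin m) (MvPolynomial (Fin m) F)) ^ e))
        (pow_zero _), MvPolynomial.coeff_mul]
    have hj'a : j' a = 0 := Finsupp.notMem_support_iff.mp hasupp
    set u₀ : Fin m →₀ ℕ := Finsupp.single a (k a) with hu₀
    set v₀ : Fin m →₀ ℕ := k - Finsupp.single a (k a) with hv₀
    have huv : u₀ + v₀ = k := by
      ext i
      simp only [Finsupp.add_apply, hu₀, hv₀, Finsupp.tsub_apply, Finsupp.single_apply]
      by_cases hia : a = i <;> simp [hia] <;> omega
    rw [Finset.sum_eq_single (u₀, v₀)]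
    · show coeff u₀ ((X a + C (X a)) ^ e) *
          coeff v₀ (j'.prod fun i e => (X i + C (X i)) ^ e) = _
      rw [coeff_pow_X_add_C, if_pos (by simp [hu₀]), ih]
      have hu₀a : u₀ a = k a := by simp [hu₀]
      have hv₀a : v₀ a = 0 := by simp [hv₀]
      have hexp : (Finsupp.single a (e - u₀ a)) + (j' - v₀) =
          (Finsupp.single a e + j') - k := by
        ext i
        by_cases hia : a = i
        · subst hia
          simp only [Finsupp.coe_add, Pi.add_apply, Finsupp.tsub_apply,
            Finsupp.single_eq_same, hu₀a, hv₀a, hj'a]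
          omega
        · simp only [Finsupp.coe_add, Pi.add_apply, Finsupp.tsub_apply,
            Finsupp.single_apply, if_neg hia, hu₀, hv₀]
          omega
      have hcoef : (e.choose (u₀ a)) * (∏ i, (j' i).choose (v₀ i)) =
          ∏ i, ((Finsupp.single a e + j') i).choose (k i) := by
        rw [Fintype.prod_eq_mul_prod_compl a fun i => (j' i).choose (v₀ i),
          Fintype.prod_eq_mul_prod_compl a fun i => ((Finsupp.single a e + j') i).choose (k i),
          hu₀a, show (j' a).choose (v₀ a) = 1 by simp [hj'a, hv₀a],
          show ((Finsupp.single a e + j') a).choose (k a) = e.choose (k a) by simp [hj'a],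
          one_mul]
        congr 1
        apply Finset.prod_congr rfl
        intro i hi
        have hia : a ≠ i := by
          rintro rfl; simp at hi
        rw [show (Finsupp.single a e + j') i = j' i by simp [Finsupp.single_apply, hia],
          show v₀ i = k i by simp [hv₀, Finsupp.tsub_apply, Finsupp.single_apply, hia]]
      rw [X_pow_eq_monomial, mul_assoc, monomial_mul,
        ← map_natCast (C : F →+* MvPolynomial (Fin m) F), C_mul_monomial, one_mul,
        ← Nat.cast_mul, hcoef, hexp]
    · rintro ⟨u, v⟩ huv' hne
      replace huv' : u + v = k := by simpa [Finset.HasAntidiagonal.mem_antidiagonal] using huv'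
      rw [coeff_pow_X_add_C]
      by_cases hu : u = Finsupp.single a (u a)
      · rw [if_pos hu]
        by_cases hva : v a = 0
        · exfalso
          apply hne
          have hua : u a = k a := by
            have := congrArg (fun w => w a) huv'
            simp only [Finsupp.add_apply, Finsupp.coe_add, Pi.add_apply] at this
            omega
          have hu' : u = u₀ := by rw [hu, hua]
          refine Prod.ext hu' ?_
          have : v = k - u := by
            ext i
            have := congrArg (fun w => w i) huv'
            simp only [Finsupp.coe_add, Pi.add_apply] at this
            simp [Finsupp.tsub_apply]
            omega
          rw [this, hu', hv₀]
        · rw [ih]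
          have : (j' a).choose (v a) = 0 := by
            rw [hj'a]; exact Nat.choose_eq_zero_of_lt (Nat.pos_of_ne_zero hva)
          rw [Finset.prod_eq_zero (Finset.mem_univ a) this]
          simp
      · rw [if_neg hu, zero_mul]
    · intro h
      exact absurd (Finset.HasAntidiagonal.mem_antidiagonal.mpr huv) h

lemma hasseDeriv_apply (k : Fin m →₀ ℕ) (f : MvPolynomial (Fin m) F) :
    hasseDeriv k f = ∑ j ∈ f.support,
      monomial (j - k) (((∏ i, (j i).choose (k i) : ℕ) : F) * MvPolynomial.coeff j f) := by
  unfold hasseDeriv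
  conv_lhs => rw [f.as_sum]
  rw [show (MvPolynomial.eval₂ (MvPolynomial.C.comp MvPolynomial.C)
      (fun j => MvPolynomial.X j + MvPolynomial.C (MvPolynomial.X j))
      (∑ v ∈ f.support, monomial v (coeff v f))) =
      ∑ v ∈ f.support, (MvPolynomial.eval₂ (MvPolynomial.C.comp MvPolynomial.C)
      (fun j => MvPolynomial.X j + MvPolynomial.C (MvPolynomial.X j))
      (monomial v (coeff v f))) from map_sum (eval₂Hom _ _) _ _]
  rw [MvPolynomial.coeff_sum]
  apply Finset.sum_congr rfl
  intro j hj
  rw [eval₂_monomial]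
  simp only [RingHom.coe_comp, Function.comp_apply]
  rw [MvPolynomial.coeff_C_mul, coeff_prod, C_mul_monomial, mul_comm]

lemma coeff_hasseDeriv (k n : Fin m →₀ ℕ) (f : MvPolynomial (Fin m) F) :
    MvPolynomial.coeff n (hasseDeriv k f) =
      ((∏ i, ((n + k) i).choose (k i) : ℕ) : F) * MvPolynomial.coeff (n + k) f := by
  rw [hasseDeriv_apply, MvPolynomial.coeff_sum]
  simp_rw [coeff_monomial]
  rw [Finset.sum_eq_single (n + k)]
  · rw [if_pos (by rw [add_tsub_cancel_right])]
  · intro j hj hne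
    by_cases hjk : j - k = n
    · rw [if_pos hjk]
      obtain ⟨i, hi⟩ : ∃ i, j i < k i := by
        by_contra h
        push_neg at h
        apply hne
        ext i
        have := congrArg (fun w => w i) hjk
        simp only [Finsupp.tsub_apply] at this
        have := h i
        simp only [Finsupp.coe_add, Pi.add_apply]
        omega
      rw [Finset.prod_eq_zero (Finset.mem_univ i) (Nat.choose_eq_zero_of_lt hi)]
      simp
    · rw [if_neg hjk]
  · intro h
    rw [MvPolynomial.notMem_support_iff.mp h, mul_zero, if_pos (by rw [add_tsub_cancel_right])]

lemma hasseDeriv_zero (f : MvPolynomial (Fin m) F) : hasseDeriv 0 f = f := by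
  apply MvPolynomial.ext
  intro n
  rw [coeff_hasseDeriv]
  simp

lemma hasseDeriv_hasseDeriv_disjoint (j k : Fin m →₀ ℕ)
    (hdisj : ∀ i, j i = 0 ∨ k i = 0) (f : MvPolynomial (Fin m) F) :
    hasseDeriv j (hasseDeriv k f) = hasseDeriv (j + k) f := by
  apply MvPolynomial.ext
  intro n
  rw [coeff_hasseDeriv, coeff_hasseDeriv, coeff_hasseDeriv, ← mul_assoc, ← Nat.cast_mul,
    ← Finset.prod_mul_distrib]
  rw [show n + j + k = n + (j + k) by rw [add_assoc]]
  congr 2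
  apply Finset.prod_congr rfl
  intro i _
  rcases hdisj i with h | h <;> simp [h, Finsupp.coe_add, Pi.add_apply]

lemma hasMultAtLeast_le (f : MvPolynomial (Fin m) F) (a : Fin m → F) (hf : f ≠ 0)
    {r : ℕ} (h : HasMultAtLeast f a r) : r ≤ f.totalDegree := by
  by_contra hlt
  push_neg at hlt
  -- pick a monomial of maximal total degree
  obtain ⟨j, hj, hjdeg⟩ : ∃ j ∈ f.support, (∑ i, j i) = f.totalDegree := by
    obtain ⟨j, hj, hjd⟩ := Finset.exists_mem_eq_sup f.support
      (MvPolynomial.support_nonempty.mpr hf) (fun j => j.sum fun _ e => e)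
    refine ⟨j, hj, ?_⟩
    rw [MvPolynomial.totalDegree, hjd]
    rw [Finsupp.sum_fintype]
    simp
  have hconst : hasseDeriv j f = C (MvPolynomial.coeff j f) := by
    apply MvPolynomial.ext
    intro n
    rw [coeff_hasseDeriv, MvPolynomial.coeff_C]
    by_cases hn : n = 0
    · subst hn
      simp
    · rw [if_neg (Ne.symm hn)]
      have hcz : MvPolynomial.coeff (n + j) f = 0 := by
        apply MvPolynomial.coeff_eq_zero_of_totalDegree_lt
        have h1 : (∑ i ∈ (n + j).support, (n + j) i) = ∑ i, (n + j) i := by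
          apply Finset.sum_subset (Finset.subset_univ _)
          intro x _ hx
          simpa using Finsupp.notMem_support_iff.mp hx
        have h2 : ∑ i, (n + j) i = (∑ i, n i) + ∑ i, j i := by
          simp [Finsupp.coe_add, Pi.add_apply, Finset.sum_add_distrib]
        have h3 : 0 < ∑ i, n i := by
          by_contra hz
          push_neg at hz
          apply hn
          ext i
          have := Finset.sum_eq_zero_iff.mp (Nat.le_zero.mp hz) i (Finset.mem_univ i)
          simpa using this
        rw [h1, h2, ← hjdeg]
        omega
      rw [hcz, mul_zero]
  have := h j (by omega)
  rw [hconst, MvPolynomial.eval_C] at this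
  exact MvPolynomial.mem_support_iff.mp hj this

lemma hasMultAtLeast_zero (f : MvPolynomial (Fin m) F) (a : Fin m → F) :
    HasMultAtLeast f a 0 := fun k hk => absurd hk (by omega)

lemma bddAbove_setOf (f : MvPolynomial (Fin m) F) (a : Fin m → F) (hf : f ≠ 0) :
    BddAbove {r | HasMultAtLeast f a r} :=
  ⟨f.totalDegree, fun r hr => hasMultAtLeast_le f a hf hr⟩

lemma hasMultAtLeast_multAt (f : MvPolynomial (Fin m) F) (a : Fin m → F) (hf : f ≠ 0) :
    HasMultAtLeast f a (multAt f a) := by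
  have h : multAt f a ∈ {r | HasMultAtLeast f a r} := by
    apply Nat.sSup_mem _ (bddAbove_setOf f a hf)
    exact ⟨0, hasMultAtLeast_zero f a⟩
  exact h

lemma not_hasMultAtLeast_succ (f : MvPolynomial (Fin m) F) (a : Fin m → F) (hf : f ≠ 0) :
    ¬ HasMultAtLeast f a (multAt f a + 1) := by
  intro h
  have : multAt f a + 1 ≤ multAt f a := le_csSup (bddAbove_setOf f a hf) h
  omega

lemma multAt_le (f : MvPolynomial (Fin m) F) (a : Fin m → F) {N : ℕ}
    (h : ∀ r, HasMultAtLeast f a r → r ≤ N) : multAt f a ≤ N := by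
  have : Set.Nonempty {r | HasMultAtLeast f a r} := ⟨0, hasMultAtLeast_zero f a⟩
  exact csSup_le this h

lemma exists_witness (f : MvPolynomial (Fin m) F) (a : Fin m → F) (hf : f ≠ 0) :
    ∃ k : Fin m →₀ ℕ, (∑ j, k j) ≤ multAt f a ∧
      MvPolynomial.eval a (hasseDeriv k f) ≠ 0 := by
  have := not_hasMultAtLeast_succ f a hf
  unfold HasMultAtLeast at this
  push_neg at this
  obtain ⟨k, hk, hne⟩ := this
  exact ⟨k, by omega, hne⟩

lemma coeff_zero_eq_eval_isEmpty (f : MvPolynomial (Fin 0) F) :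
    f.coeff 0 = (eval fun x => x.elim0) f := by
  induction f using MvPolynomial.induction_on with
  | C a => simp
  | add p q hp hq => simp [hp, hq]
  | mul_X p i _ => exact i.elim0

lemma multAt_zero_of_isEmpty (f : MvPolynomial (Fin 0) F) (a : Fin 0 → F) (hf : f ≠ 0) :
    multAt f a = 0 := by
  have h1 : ¬ HasMultAtLeast f a 1 := by
    intro h
    have := h 0 (by simp)
    rw [hasseDeriv_zero] at this
    have ha : a = (fun x => x.elim0) := by
      funext x; exact x.elim0
    have : (MvPolynomial.isEmptyAlgEquiv F (Fin 0)) f = 0 := by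
      rw [MvPolynomial.isEmptyAlgEquiv_apply]
      rw [ha] at this
      exact (coeff_zero_eq_eval_isEmpty f).trans this
    exact hf ((map_eq_zero_iff _ (AlgEquiv.injective _)).mp this)
  have : multAt f a ≤ 0 := by
    apply multAt_le
    intro r hr
    by_contra hrpos
    exact h1 (fun k hk => hr k (by omega))
  omega

end CommRingPart

section Plumbing

variable {m : ℕ}

lemma cons_add_cons (x y : ℕ) (s t : Fin m →₀ ℕ) :
    Finsupp.cons x s + Finsupp.cons y t = Finsupp.cons (x + y) (s + t) := by
  ext i
  refine Fin.cases ?_ (fun j => ?_) i <;>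
    simp [Finsupp.cons_zero, Finsupp.cons_succ]

lemma sum_cons (x : ℕ) (s : Fin m →₀ ℕ) :
    (∑ j, (Finsupp.cons x s) j) = x + ∑ j, s j := by
  rw [Fin.sum_univ_succ]
  simp [Finsupp.cons_zero, Finsupp.cons_succ]

lemma lex_le_of_cons_le {d : ℕ} {s t : Fin m →₀ ℕ}
    (h : toLex (Finsupp.cons d s) ≤ toLex (Finsupp.cons d t)) : toLex s ≤ toLex t := by
  rcases (le_iff_eq_or_lt.mp h).imp id Finsupp.Lex.lt_iff.mp with heq | ⟨w, hw, hlt⟩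
  · have : Finsupp.cons d s = Finsupp.cons d t := toLex.injective heq
    have hst : s = t := by
      ext j
      have := congrArg (fun w => w j.succ) this
      simpa [Finsupp.cons_succ] using this
    rw [hst]
  · revert hw hlt
    refine Fin.cases ?_ (fun w' => ?_) w <;> intro hw hlt
    · exact absurd hlt (by simp [Finsupp.cons_zero])
    · apply le_of_lt
      rw [Finsupp.Lex.lt_iff]
      refine ⟨w', fun j hj => ?_, ?_⟩
      · have := hw j.succ (by simpa [Fin.succ_lt_succ_iff] using hj)
        simpa [Finsupp.cons_succ] using this
      · simpa [Finsupp.cons_succ] using hlt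

lemma head_le_of_lex_le {s t : Fin (m+1) →₀ ℕ} (h : toLex s ≤ toLex t) : s 0 ≤ t 0 := by
  rcases (le_iff_eq_or_lt.mp h).imp id Finsupp.Lex.lt_iff.mp with heq | ⟨w, hw, hlt⟩
  · have : s = t := toLex.injective heq
    rw [this]
  · by_cases hw0 : w = 0
    · subst hw0
      exact le_of_lt hlt
    · exact le_of_eq (hw 0 (Fin.pos_of_ne_zero hw0))

lemma sum_piFinset_succ (S : Fin (m+1) → Finset F) (φ : (Fin (m+1) → F) → ℕ) :
    ∑ p ∈ Fintype.piFinset S, φ p =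
      ∑ q ∈ (S 0) ×ˢ Fintype.piFinset (fun j : Fin m => S j.succ), φ (Fin.cons q.1 q.2) := by
  apply Finset.sum_nbij' (fun p => (p 0, Fin.tail p)) (fun q => Fin.cons q.1 q.2)
  · intro p hp
    rw [Finset.mem_product]
    rw [Fintype.mem_piFinset] at hp
    exact ⟨hp 0, Fintype.mem_piFinset.mpr fun j => hp j.succ⟩
  · intro q hq
    rw [Finset.mem_product] at hq
    rw [Fintype.mem_piFinset]
    intro j
    refine Fin.cases ?_ (fun j' => ?_) j
    · simpa using hq.1
    · simpa using Fintype.mem_piFinset.mp hq.2 j'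
  · intro p _
    exact Fin.cons_self_tail p
  · intro q _
    simp
  · intro p _
    rw [Fin.cons_self_tail]

lemma prod_erase_zero (g : Fin (m+1) → ℕ) :
    ∏ l ∈ Finset.univ.erase 0, g l = ∏ l : Fin m, g l.succ := by
  have h : (Finset.univ.erase (0 : Fin (m+1))) = Finset.univ.image Fin.succ := by
    ext x
    simp only [Finset.mem_erase, Finset.mem_univ, and_true, Finset.mem_image, true_and]
    constructor
    · intro hx
      exact Fin.exists_succ_eq.mpr hx
    · rintro ⟨y, rfl⟩
      exact Fin.succ_ne_zero y
  rw [h, Finset.prod_image (fun a _ b _ h => Fin.succ_injective m h)]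

lemma prod_erase_succ (j : Fin m) (g : Fin (m+1) → ℕ) :
    ∏ l ∈ Finset.univ.erase j.succ, g l = g 0 * ∏ l ∈ Finset.univ.erase j, g l.succ := by
  have h : (Finset.univ.erase (j.succ) : Finset (Fin (m+1))) =
      insert 0 ((Finset.univ.erase j).image Fin.succ) := by
    ext x
    simp only [Finset.mem_erase, Finset.mem_univ, and_true, Finset.mem_insert,
      Finset.mem_image, true_and]
    constructor
    · intro hx
      by_cases hx0 : x = 0
      · exact Or.inl hx0
      · obtain ⟨y, hy⟩ := Fin.exists_succ_eq.mpr hx0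
        refine Or.inr ⟨y, ?_, hy⟩
        rintro rfl
        exact hx hy.symm
    · rintro (rfl | ⟨y, hyj, rfl⟩)
      · exact (Fin.succ_ne_zero j).symm
      · simpa using hyj
  rw [h, Finset.prod_insert (by simp [Fin.succ_ne_zero]),
    Finset.prod_image (fun a _ b _ h => Fin.succ_injective m h)]

end Plumbing

section FieldPart

variable {F : Type*} [Field F]

lemma pow_sub_dvd (g : Polynomial F) (a : F) (r : ℕ)
    (h : ∀ t, t < r → (Polynomial.hasseDeriv t g).eval a = 0) :
    (Polynomial.X - Polynomial.C a) ^ r ∣ g := by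
  conv_rhs => rw [← Polynomial.sum_taylor_eq g a]
  rw [Polynomial.sum_def]
  apply Finset.dvd_sum
  intro n hn
  have hne : (Polynomial.taylor a g).coeff n ≠ 0 := Polynomial.mem_support_iff.mp hn
  rw [Polynomial.taylor_coeff] at hne
  have hrn : r ≤ n := by
    by_contra hlt
    exact hne (h n (by omega))
  exact Dvd.dvd.mul_left (pow_dvd_pow _ hrn) _

lemma sum_mult_le_natDegree (g : Polynomial F) (hg : g ≠ 0) (S : Finset F) (r : F → ℕ)
    (h : ∀ a ∈ S, ∀ t, t < r a → (Polynomial.hasseDeriv t g).eval a = 0) :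
    ∑ a ∈ S, r a ≤ g.natDegree := by
  classical
  calc ∑ a ∈ S, r a ≤ ∑ a ∈ S, g.roots.count a := by
        apply Finset.sum_le_sum
        intro a ha
        rw [Polynomial.count_roots]
        exact (Polynomial.le_rootMultiplicity_iff hg).mpr (pow_sub_dvd g a (r a) (h a ha))
    _ ≤ ∑ a ∈ S ∪ g.roots.toFinset, g.roots.count a :=
        Finset.sum_le_sum_of_subset Finset.subset_union_left
    _ = ∑ a ∈ g.roots.toFinset, g.roots.count a := by
        apply (Finset.sum_subset Finset.subset_union_right ?_).symm
        intro x _ hx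
        exact Multiset.count_eq_zero_of_notMem (by simpa using hx)
    _ = Multiset.card g.roots := g.roots.toFinset_sum_count_eq
    _ ≤ g.natDegree := g.card_roots'

theorem main_aux : ∀ (m : ℕ) (f : MvPolynomial (Fin m) F), f ≠ 0 →
    ∀ (i : Fin m →₀ ℕ), MvPolynomial.coeff i f ≠ 0 →
    (∀ j ∈ f.support, toLex j ≤ toLex i) →
    ∀ S : Fin m → Finset F,
    ∑ p ∈ Fintype.piFinset S, multAt f p ≤
      ∑ j, i j * ∏ l ∈ Finset.univ.erase j, (S l).card := by
  intro m
  induction m with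
  | zero =>
    intro f hf i hcoeff hlead S
    have h0 : ∀ p ∈ Fintype.piFinset S, multAt f p = 0 :=
      fun p _ => multAt_zero_of_isEmpty f p hf
    rw [Finset.sum_congr rfl h0]
    simp
  | succ m ih =>
    intro f hf i hcoeff hlead S
    set d1 := i 0 with hd1
    set P : MvPolynomial (Fin m) F := (MvPolynomial.finSuccEquiv F m f).coeff d1 with hP
    have hPcoeff : ∀ n' : Fin m →₀ ℕ,
        MvPolynomial.coeff n' P = MvPolynomial.coeff (n'.cons d1) f :=
      fun n' => MvPolynomial.finSuccEquiv_coeff_coeff n' f d1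
    have hfj0 : ∀ j ∈ f.support, j 0 ≤ d1 := fun j hj => head_le_of_lex_le (hlead j hj)
    have hPci : MvPolynomial.coeff (Finsupp.tail i) P ≠ 0 := by
      rw [hPcoeff, hd1, Finsupp.cons_tail]
      exact hcoeff
    have hPne : P ≠ 0 := fun h => hPci (by rw [h, MvPolynomial.coeff_zero])
    have hPlead : ∀ n' ∈ P.support, toLex n' ≤ toLex (Finsupp.tail i) := by
      intro n' hn'
      have h2 : (n'.cons d1) ∈ f.support := by
        rw [MvPolynomial.mem_support_iff, ← hPcoeff]
        exact MvPolynomial.mem_support_iff.mp hn'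
      have h3 := hlead _ h2
      rw [show i = Finsupp.cons d1 (Finsupp.tail i) by rw [hd1, Finsupp.cons_tail]] at h3
      exact lex_le_of_cons_le h3
    have key : ∀ b ∈ Fintype.piFinset (fun j : Fin m => S j.succ),
        ∑ a ∈ S 0, multAt f (Fin.cons a b) ≤ d1 + (S 0).card * multAt P b := by
      intro b _
      obtain ⟨k', hk'sum, hk'ne⟩ := exists_witness P b hPne
      set K : Fin (m+1) →₀ ℕ := Finsupp.cons 0 k' with hK
      set h := hasseDeriv K f with hh
      set g : Polynomial F := (MvPolynomial.finSuccEquiv F m h).map (MvPolynomial.eval b) with hg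
      have hφh : ∀ (e : ℕ) (n' : Fin m →₀ ℕ),
          MvPolynomial.coeff n' ((MvPolynomial.finSuccEquiv F m h).coeff e) =
          ((∏ x, ((n' + k') x).choose (k' x) : ℕ) : F) *
            MvPolynomial.coeff ((n' + k').cons e) f := by
        intro e n'
        rw [MvPolynomial.finSuccEquiv_coeff_coeff, hh, coeff_hasseDeriv]
        have h1 : (n'.cons e) + K = (n' + k').cons e := by
          rw [hK, cons_add_cons, add_zero]
        have hp : (∏ x, (((n' + k').cons e) x).choose (K x))
            = ∏ x, ((n' + k') x).choose (k' x) := by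
          rw [hK, Fin.prod_univ_succ]
          simp [Finsupp.cons_zero, Finsupp.cons_succ]
        rw [h1, hp]
      have hgcoeff : ∀ e : ℕ, g.coeff e =
          MvPolynomial.eval b ((MvPolynomial.finSuccEquiv F m h).coeff e) :=
        fun e => Polynomial.coeff_map _ e
      have htop : (MvPolynomial.finSuccEquiv F m h).coeff d1 = hasseDeriv k' P := by
        apply MvPolynomial.ext
        intro n'
        rw [hφh, coeff_hasseDeriv, hPcoeff]
      have hgd1 : g.coeff d1 ≠ 0 := by
        rw [hgcoeff, htop]
        exact hk'ne
      have hgne : g ≠ 0 := fun h0 => hgd1 (by rw [h0, Polynomial.coeff_zero])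
      have hdeg : g.natDegree = d1 := by
        apply le_antisymm
        · rw [Polynomial.natDegree_le_iff_coeff_eq_zero]
          intro e he
          rw [hgcoeff]
          have hz : (MvPolynomial.finSuccEquiv F m h).coeff e = 0 := by
            apply MvPolynomial.ext
            intro n'
            rw [hφh, MvPolynomial.coeff_zero]
            have hcz : MvPolynomial.coeff ((n' + k').cons e) f = 0 := by
              by_contra hne
              have hmem := hfj0 _ (MvPolynomial.mem_support_iff.mpr hne)
              rw [Finsupp.cons_zero] at hmem
              omega
            rw [hcz, mul_zero]
          rw [hz, map_zero]
        · exact Polynomial.le_natDegree_of_ne_zero hgd1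
      have hvan : ∀ a ∈ S 0, ∀ t, t < multAt f (Fin.cons a b) - (∑ j, k' j) →
          (Polynomial.hasseDeriv t g).eval a = 0 := by
        intro a _ t ht
        set w := hasseDeriv (Finsupp.cons t (0 : Fin m →₀ ℕ) + K) f with hwdef
        have hw : hasseDeriv (Finsupp.cons t (0 : Fin m →₀ ℕ)) h = w := by
          rw [hh]
          apply hasseDeriv_hasseDeriv_disjoint
          intro x
          refine Fin.cases ?_ (fun y => ?_) x
          · right
            rw [hK, Finsupp.cons_zero]
          · left
            simp [Finsupp.cons_succ]
        have hmap : Polynomial.hasseDeriv t g =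
            (MvPolynomial.finSuccEquiv F m w).map (MvPolynomial.eval b) := by
          apply Polynomial.ext
          intro e
          rw [Polynomial.hasseDeriv_coeff, ← hw]
          simp only [Polynomial.coeff_map]
          have hcc : (MvPolynomial.finSuccEquiv F m
              (hasseDeriv (Finsupp.cons t (0 : Fin m →₀ ℕ)) h)).coeff e =
              (((e + t).choose t : ℕ) : MvPolynomial (Fin m) F) *
                (MvPolynomial.finSuccEquiv F m h).coeff (e + t) := by
            apply MvPolynomial.ext
            intro n'
            rw [MvPolynomial.finSuccEquiv_coeff_coeff, coeff_hasseDeriv]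
            have h1 : (n'.cons e) + Finsupp.cons t (0 : Fin m →₀ ℕ) = n'.cons (e + t) := by
              rw [cons_add_cons, add_zero]
            have hp : (∏ x, ((n'.cons (e + t)) x).choose
                ((Finsupp.cons t (0 : Fin m →₀ ℕ)) x)) = (e + t).choose t := by
              rw [Fin.prod_univ_succ]
              simp [Finsupp.cons_zero, Finsupp.cons_succ]
            rw [h1, hp, ← map_natCast (MvPolynomial.C : F →+* MvPolynomial (Fin m) F),
              MvPolynomial.coeff_C_mul, MvPolynomial.finSuccEquiv_coeff_coeff]
          rw [hcc, map_mul, map_natCast, hgcoeff]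
        rw [hmap, ← MvPolynomial.eval_eq_eval_mv_eval']
        have hsum : (∑ j, (Finsupp.cons t (0 : Fin m →₀ ℕ) + K) j) = t + ∑ j, k' j := by
          rw [hK, cons_add_cons, sum_cons, add_zero, zero_add]
        exact hasMultAtLeast_multAt f (Fin.cons a b) hf _ (by rw [hsum]; omega)
      have huni : ∑ a ∈ S 0, (multAt f (Fin.cons a b) - (∑ j, k' j)) ≤ g.natDegree :=
        sum_mult_le_natDegree g hgne (S 0)
          (fun a => multAt f (Fin.cons a b) - (∑ j, k' j)) hvan
      rw [hdeg] at huni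
      calc ∑ a ∈ S 0, multAt f (Fin.cons a b)
          ≤ ∑ a ∈ S 0, ((multAt f (Fin.cons a b) - (∑ j, k' j)) + (∑ j, k' j)) :=
            Finset.sum_le_sum (fun a _ => by omega)
        _ = (∑ a ∈ S 0, (multAt f (Fin.cons a b) - (∑ j, k' j)))
              + (S 0).card * (∑ j, k' j) := by
            rw [Finset.sum_add_distrib, Finset.sum_const, smul_eq_mul]
        _ ≤ d1 + (S 0).card * multAt P b := by
            have := Nat.mul_le_mul_left (S 0).card hk'sum
            omega
    have hrhs : ∑ j : Fin (m+1), i j * ∏ l ∈ Finset.univ.erase j, (S l).card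
        = d1 * ∏ l : Fin m, (S l.succ).card +
          (S 0).card * ∑ j : Fin m, (Finsupp.tail i) j *
            ∏ l ∈ Finset.univ.erase j, (S l.succ).card := by
      rw [Fin.sum_univ_succ, prod_erase_zero]
      congr 1
      rw [Finset.mul_sum]
      apply Finset.sum_congr rfl
      intro j _
      rw [prod_erase_succ, Finsupp.tail_apply]
      ring
    calc ∑ p ∈ Fintype.piFinset S, multAt f p
        = ∑ a ∈ S 0, ∑ b ∈ Fintype.piFinset (fun j : Fin m => S j.succ),
            multAt f (Fin.cons a b) := by
          rw [sum_piFinset_succ S (fun p => multAt f p), Finset.sum_product]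
      _ = ∑ b ∈ Fintype.piFinset (fun j : Fin m => S j.succ), ∑ a ∈ S 0,
            multAt f (Fin.cons a b) := Finset.sum_comm
      _ ≤ ∑ b ∈ Fintype.piFinset (fun j : Fin m => S j.succ),
            (d1 + (S 0).card * multAt P b) := Finset.sum_le_sum key
      _ = (Fintype.piFinset fun j : Fin m => S j.succ).card * d1 +
            (S 0).card * ∑ b ∈ Fintype.piFinset (fun j : Fin m => S j.succ), multAt P b := by
          rw [Finset.sum_add_distrib, Finset.sum_const, smul_eq_mul, Finset.mul_sum]
      _ ≤ (∏ l : Fin m, (S l.succ).card) * d1 +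
            (S 0).card * ∑ j : Fin m, (Finsupp.tail i) j *
              ∏ l ∈ Finset.univ.erase j, (S l.succ).card := by
          rw [Fintype.card_piFinset]
          exact Nat.add_le_add_left (Nat.mul_le_mul_left _
            (ih P hPne (Finsupp.tail i) hPci hPlead (fun j => S j.succ))) _
      _ = ∑ j : Fin (m+1), i j * ∏ l ∈ Finset.univ.erase j, (S l).card := by
          rw [hrhs]
          ring

end FieldPart

end SumMultAux

/-- If the leading monomial of a nonzero `f` with respect to the
lexicographic ordering (with `X_m ≺ ⋯ ≺ X_1`) is `X_1^{i_1} ⋯ X_m^{i_m}`, then the sum over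
all points `a ∈ S_1 × ⋯ × S_m` of the multiplicity of `f` at `a` is at most
`i_1 s_2 ⋯ s_m + s_1 i_2 s_3 ⋯ s_m + ⋯ + s_1 ⋯ s_{m−1} i_m`. -/
theorem sum_multiplicities_le {F : Type*} [Field F] {m : ℕ}
    (f : MvPolynomial (Fin m) F) (hf : f ≠ 0) (i : Fin m →₀ ℕ)
    (hcoeff : MvPolynomial.coeff i f ≠ 0)
    (hlead : ∀ j ∈ f.support, toLex j ≤ toLex i)
    (S : Fin m → Finset F) :
    ∑ p ∈ Fintype.piFinset S, multAt f p ≤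
      ∑ j, i j * ∏ l ∈ Finset.univ.erase j, (S l).card := by
  exact SumMultAux.main_aux m f hf i hcoeff hlead S
end

section
/- Let F be a field and F(X) ∈ F[X_1,...,X_m] nonzero with leading monomial X_1^{i_1}⋯X_m^{i_m} with respect to a lexicographic ordering, and let r ≥ 1. For finite sets S_1,...,S_m ⊆ F with |S_j| = s_j, the number of points of S_1 × ... × S_m at which F has multiplicity at least r is at most (i_1 s_2⋯s_m + s_1 i_2 s_3⋯s_m + ... + s_1⋯s_{m−1} i_m)/r. -/
open MvPolynomial in
lemma prod_X_pow_univ {R : Type*} [CommSemiring R] {m : ℕ} (x : Fin m → ℕ) :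
    (∏ j, (X j : MvPolynomial (Fin m) R) ^ x j)
      = monomial (Finsupp.equivFunOnFinite.symm x) (1 : R) := by
  rw [← prod_X_pow_eq_monomial]
  refine (Finset.prod_subset (Finset.subset_univ _) ?_).symm
  intro j _ hj
  have : x j = 0 := by simpa [Finsupp.equivFunOnFinite] using hj
  simp [this]

open MvPolynomial in
lemma coeff_hasseDeriv {F : Type*} [CommRing F] {m : ℕ} (k n : Fin m →₀ ℕ)
    (f : MvPolynomial (Fin m) F) :
    MvPolynomial.coeff n (hasseDeriv k f) =
      ((∏ j, (n j + k j).choose (k j) : ℕ) : F) * MvPolynomial.coeff (n + k) f := by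
  induction f using MvPolynomial.induction_on' with
  | add p q hp hq =>
    simp only [hasseDeriv, eval₂_add, coeff_add] at *
    rw [hp, hq]; ring
  | monomial d c =>
    rw [hasseDeriv, eval₂_monomial]
    rw [Finsupp.prod_fintype _ _ (fun j => pow_zero _)]
    simp_rw [add_pow]
    rw [Finset.prod_univ_sum, Finset.mul_sum, coeff_sum, coeff_sum]
    have h1 : ∀ x : Fin m → ℕ,
        MvPolynomial.coeff n (MvPolynomial.coeff k
          ((C.comp C) c * ∏ i, (X i ^ x i * C (X i) ^ (d i - x i) *
            (((d i).choose (x i) : ℕ) : MvPolynomial (Fin m) (MvPolynomial (Fin m) F))))) =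
        if x = Finsupp.equivFunOnFinite k then
          c * ((∏ i, (d i).choose (x i) : ℕ) : F) *
            (if Finsupp.equivFunOnFinite.symm (fun j => d j - x j) = n then 1 else 0)
        else 0 := by
      intro x
      have e1 : (C.comp C) c * ∏ i, (X i ^ x i * C (X i) ^ (d i - x i) *
            (((d i).choose (x i) : ℕ) : MvPolynomial (Fin m) (MvPolynomial (Fin m) F)))
          = C (C c * (∏ i, X i ^ (d i - x i)) * ((∏ i, (d i).choose (x i) : ℕ) : MvPolynomial (Fin m) F))
              * monomial (Finsupp.equivFunOnFinite.symm x) 1 := by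
        rw [Finset.prod_mul_distrib, Finset.prod_mul_distrib, prod_X_pow_univ]
        rw [show (∏ i, (C (X i) : MvPolynomial (Fin m) (MvPolynomial (Fin m) F)) ^ (d i - x i))
            = C (∏ i, X i ^ (d i - x i)) by rw [map_prod]; exact Finset.prod_congr rfl fun i _ => by rw [map_pow]]
        rw [show (∏ i, (((d i).choose (x i) : ℕ) : MvPolynomial (Fin m) (MvPolynomial (Fin m) F)))
            = C ((∏ i, (d i).choose (x i) : ℕ) : MvPolynomial (Fin m) F) by
          rw [map_natCast, Nat.cast_prod]]
        simp only [RingHom.coe_comp, Function.comp_apply, map_mul]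
        ring
      rw [e1, coeff_C_mul, coeff_monomial]
      by_cases hx : Finsupp.equivFunOnFinite.symm x = k
      · have hx' : x = Finsupp.equivFunOnFinite k := (Equiv.symm_apply_eq _).mp hx
        rw [if_pos hx, if_pos hx']
        rw [show (C c * (∏ i, X i ^ (d i - x i)) *
            ((∏ i, (d i).choose (x i) : ℕ) : MvPolynomial (Fin m) F)) =
            C (c * ((∏ i, (d i).choose (x i) : ℕ) : F)) * ∏ i, X i ^ (d i - x i) by
          simp only [map_mul, map_natCast]; ring]
        rw [prod_X_pow_univ fun j => d j - x j, mul_one, coeff_C_mul, coeff_monomial]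
      · rw [if_neg hx, if_neg (fun h => hx ((Equiv.symm_apply_eq _).mpr h)), mul_zero, coeff_zero]
    simp_rw [h1]
    rw [Finset.sum_ite_eq' (Fintype.piFinset fun x => Finset.range (d x + 1))
      (Finsupp.equivFunOnFinite k)]
    rw [coeff_monomial]
    have hcoe : ∀ j, (Finsupp.equivFunOnFinite k : Fin m → ℕ) j = k j := fun _ => rfl
    by_cases hkd : ∀ j, k j ≤ d j
    · have hmem : (Finsupp.equivFunOnFinite k : Fin m → ℕ) ∈
          Fintype.piFinset fun x => Finset.range (d x + 1) := by
        simp only [Fintype.mem_piFinset, Finset.mem_range]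
        exact fun j => Nat.lt_succ_of_le (hkd j)
      rw [if_pos hmem]
      by_cases hd : d = n + k
      · have hsub : (fun j => d j - (Finsupp.equivFunOnFinite k : Fin m → ℕ) j) = ⇑n := by
          funext j; rw [hcoe, hd]; simp [Finsupp.add_apply]
        rw [hsub, if_pos (by rw [Equiv.symm_apply_eq]; rfl), if_pos hd]
        have hch : ∀ i, (d i).choose ((Finsupp.equivFunOnFinite k : Fin m → ℕ) i)
            = (n i + k i).choose (k i) := by
          intro i; rw [hcoe, hd]; simp [Finsupp.add_apply]
        simp_rw [hch]
        ring
      · rw [if_neg hd, mul_zero]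
        rw [if_neg, mul_zero]
        intro hc
        apply hd
        rw [Equiv.symm_apply_eq] at hc
        ext j
        have h2 := congrFun hc j
        simp only [hcoe] at h2
        have h3 : (Finsupp.equivFunOnFinite n : Fin m → ℕ) j = n j := rfl
        rw [h3] at h2
        have hk := hkd j
        simp only [Finsupp.add_apply]
        omega
    · rw [if_neg]
      · by_cases hd : d = n + k
        · exfalso; apply hkd; intro j; rw [hd]; simp [Finsupp.add_apply]
        · rw [if_neg hd, mul_zero]
      · simp only [Fintype.mem_piFinset, Finset.mem_range]
        push_neg
        obtain ⟨j, hj⟩ := not_forall.mp hkd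
        exact ⟨j, by simp only [hcoe]; omega⟩

section Basic
open MvPolynomial
variable {F : Type*} [CommRing F] {m : ℕ}

lemma hasseDeriv_zero_eq (f : MvPolynomial (Fin m) F) : hasseDeriv 0 f = f := by
  apply MvPolynomial.ext
  intro n
  rw [coeff_hasseDeriv]
  simp

lemma hasseDeriv_zero' (k : Fin m →₀ ℕ) : hasseDeriv k (0 : MvPolynomial (Fin m) F) = 0 := by
  apply MvPolynomial.ext
  intro n
  rw [coeff_hasseDeriv]
  simp

lemma hasseDeriv_natCast_mul (k : Fin m →₀ ℕ) (c : ℕ) (f : MvPolynomial (Fin m) F) :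
    hasseDeriv k ((c : MvPolynomial (Fin m) F) * f) = (c : MvPolynomial (Fin m) F) * hasseDeriv k f := by
  apply MvPolynomial.ext
  intro n
  rw [coeff_hasseDeriv, ← map_natCast (C : F →+* MvPolynomial (Fin m) F), coeff_C_mul,
    coeff_C_mul, coeff_hasseDeriv]
  ring

/-- Evaluating the Hasse derivative: it is the `k`-th coefficient of `f(X + a)`. -/
lemma eval_hasseDeriv (k : Fin m →₀ ℕ) (f : MvPolynomial (Fin m) F) (a : Fin m → F) :
    MvPolynomial.eval a (hasseDeriv k f) =
      MvPolynomial.coeff k (MvPolynomial.eval₂ C (fun j => X j + C (a j)) f) := by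
  rw [hasseDeriv, ← coeff_map]
  congr 1
  have h : (MvPolynomial.map (eval a)).comp
        (eval₂Hom ((C : MvPolynomial (Fin m) F →+* _).comp (C : F →+* _))
          (fun j => X j + C (X j)))
      = eval₂Hom (C : F →+* MvPolynomial (Fin m) F) (fun j => X j + C (a j)) := by
    apply MvPolynomial.ringHom_ext <;> intro x <;> simp
  exact congrFun (congrArg DFunLike.coe h) f

lemma shift_injective (a : Fin m → F) :
    Function.Injective (eval₂Hom (C : F →+* MvPolynomial (Fin m) F) (fun j => X j + C (a j))) := by
  have h : (eval₂Hom (C : F →+* MvPolynomial (Fin m) F) (fun j => X j - C (a j))).comp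
      (eval₂Hom (C : F →+* MvPolynomial (Fin m) F) (fun j => X j + C (a j))) = RingHom.id _ := by
    apply MvPolynomial.ringHom_ext <;> intro x <;> simp
  intro p q hpq
  have := congrArg (eval₂Hom (C : F →+* MvPolynomial (Fin m) F) (fun j => X j - C (a j))) hpq
  rwa [← RingHom.comp_apply, ← RingHom.comp_apply, h, RingHom.id_apply, RingHom.id_apply] at this

lemma exists_eval_hasseDeriv_ne_zero {f : MvPolynomial (Fin m) F} (hf : f ≠ 0) (a : Fin m → F) :
    ∃ k, MvPolynomial.eval a (hasseDeriv k f) ≠ 0 := by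
  have h : MvPolynomial.eval₂ C (fun j => X j + C (a j)) f ≠ 0 := by
    intro h0
    exact hf (shift_injective a (by rw [map_zero]; exact h0))
  obtain ⟨k, hk⟩ := MvPolynomial.ne_zero_iff.mp h
  exact ⟨k, by rw [eval_hasseDeriv]; exact hk⟩

lemma hasMultAtLeast_zero (f : MvPolynomial (Fin m) F) (a : Fin m → F) :
    HasMultAtLeast f a 0 := fun k hk => absurd hk (Nat.not_lt_zero _)

lemma bddAbove_hasMultAtLeast {f : MvPolynomial (Fin m) F} (hf : f ≠ 0) (a : Fin m → F) :
    BddAbove {r | HasMultAtLeast f a r} := by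
  obtain ⟨k, hk⟩ := exists_eval_hasseDeriv_ne_zero hf a
  exact ⟨∑ j, k j, fun r hr => le_of_not_gt fun h => hk (hr k h)⟩

lemma multAt_mem {f : MvPolynomial (Fin m) F} (hf : f ≠ 0) (a : Fin m → F) :
    HasMultAtLeast f a (multAt f a) := by
  have h0 : (0:ℕ) ∈ {r | HasMultAtLeast f a r} := hasMultAtLeast_zero f a
  exact Nat.sSup_mem ⟨0, h0⟩ (bddAbove_hasMultAtLeast hf a)

lemma le_multAt {f : MvPolynomial (Fin m) F} (hf : f ≠ 0) {a : Fin m → F} {r : ℕ}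
    (h : HasMultAtLeast f a r) : r ≤ multAt f a :=
  le_csSup (bddAbove_hasMultAtLeast hf a) h

lemma choose_aux (a b c : ℕ) :
    (a + c).choose c * (a + c + b).choose b = (b + c).choose b * (a + b + c).choose (b + c) := by
  apply @Nat.cast_injective ℚ _ _
  push_cast
  rw [Nat.cast_choose ℚ (by omega : c ≤ a + c), Nat.cast_choose ℚ (by omega : b ≤ a + c + b),
    Nat.cast_choose ℚ (by omega : b ≤ b + c), Nat.cast_choose ℚ (by omega : b + c ≤ a + b + c)]
  have e1 : a + c - c = a := by omega
  have e2 : a + c + b - b = a + c := by omega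
  have e3 : b + c - b = c := by omega
  have e4 : a + b + c - (b + c) = a := by omega
  have e5 : a + c + b = a + b + c := by omega
  rw [e1, e2, e3, e4, e5]
  have n1 : ((a).factorial : ℚ) ≠ 0 := by positivity
  have n2 : ((b).factorial : ℚ) ≠ 0 := by positivity
  have n3 : ((c).factorial : ℚ) ≠ 0 := by positivity
  have n4 : (((a+c)).factorial : ℚ) ≠ 0 := by positivity
  have n5 : (((b+c)).factorial : ℚ) ≠ 0 := by positivity
  field_simp

lemma hasseDeriv_hasseDeriv (k k' : Fin m →₀ ℕ) (f : MvPolynomial (Fin m) F) :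
    hasseDeriv k' (hasseDeriv k f) =
      ((∏ j, (k j + k' j).choose (k j) : ℕ) : MvPolynomial (Fin m) F) * hasseDeriv (k + k') f := by
  apply MvPolynomial.ext
  intro n
  rw [coeff_hasseDeriv, coeff_hasseDeriv, ← map_natCast (C : F →+* MvPolynomial (Fin m) F),
    coeff_C_mul, coeff_hasseDeriv]
  rw [show n + k' + k = n + (k + k') by rw [add_assoc, add_comm k' k]]
  rw [← mul_assoc, ← mul_assoc, ← Nat.cast_mul, ← Nat.cast_mul,
    ← Finset.prod_mul_distrib, ← Finset.prod_mul_distrib]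
  congr 2
  apply Finset.prod_congr rfl
  intro j _
  simp only [Finsupp.add_apply]
  rw [← add_assoc]
  exact choose_aux (n j) (k j) (k' j)

lemma hasMultAtLeast_hasseDeriv {f : MvPolynomial (Fin m) F} {a : Fin m → F} {r : ℕ}
    (h : HasMultAtLeast f a r) (k : Fin m →₀ ℕ) :
    HasMultAtLeast (hasseDeriv k f) a (r - ∑ j, k j) := by
  intro k' hk'
  rw [hasseDeriv_hasseDeriv, map_mul]
  have h0 : MvPolynomial.eval a (hasseDeriv (k + k') f) = 0 := by
    apply h
    have : ∑ j, (k + k') j = (∑ j, k j) + ∑ j, k' j := by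
      simp [Finsupp.add_apply, Finset.sum_add_distrib]
    omega
  rw [h0, mul_zero]
end Basic

section Succ
open MvPolynomial
variable {F : Type*} [CommRing F] {m : ℕ}

lemma cons_add_cons (t s : ℕ) (n k : Fin m →₀ ℕ) :
    Finsupp.cons t n + Finsupp.cons s k = Finsupp.cons (t + s) (n + k) := by
  ext j
  refine Fin.cases ?_ (fun j' => ?_) j <;>
    simp [Finsupp.cons_zero, Finsupp.cons_succ, Finsupp.add_apply]

lemma finSuccEquiv_hasseDeriv_coeff (s : ℕ) (k : Fin m →₀ ℕ)
    (f : MvPolynomial (Fin (m + 1)) F) (t : ℕ) :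
    (MvPolynomial.finSuccEquiv F m (hasseDeriv (Finsupp.cons s k) f)).coeff t
      = hasseDeriv k ((Polynomial.hasseDeriv s (MvPolynomial.finSuccEquiv F m f)).coeff t) := by
  apply MvPolynomial.ext
  intro n
  rw [MvPolynomial.finSuccEquiv_coeff_coeff, coeff_hasseDeriv, Polynomial.hasseDeriv_coeff,
    hasseDeriv_natCast_mul, ← map_natCast (C : F →+* MvPolynomial (Fin m) F), coeff_C_mul,
    coeff_hasseDeriv, MvPolynomial.finSuccEquiv_coeff_coeff, cons_add_cons]
  rw [Fin.prod_univ_succ]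
  simp only [Finsupp.cons_zero, Finsupp.cons_succ]
  push_cast
  ring

lemma map_finSuccEquiv_hasseDeriv (s : ℕ) (k : Fin m →₀ ℕ)
    (f : MvPolynomial (Fin (m + 1)) F) (b : Fin m → F) :
    Polynomial.hasseDeriv s (Polynomial.map (MvPolynomial.eval b)
        (MvPolynomial.finSuccEquiv F m (hasseDeriv (Finsupp.cons 0 k) f)))
      = Polynomial.map (MvPolynomial.eval b)
          (MvPolynomial.finSuccEquiv F m (hasseDeriv (Finsupp.cons s k) f)) := by
  ext t
  rw [Polynomial.hasseDeriv_coeff, Polynomial.coeff_map, Polynomial.coeff_map,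
    finSuccEquiv_hasseDeriv_coeff, finSuccEquiv_hasseDeriv_coeff,
    Polynomial.hasseDeriv_zero', Polynomial.hasseDeriv_coeff, hasseDeriv_natCast_mul, map_mul]
  simp [map_natCast]

lemma pow_X_sub_C_dvd {R : Type*} [CommRing R] (q : Polynomial R) (a : R) (n : ℕ)
    (h : ∀ s < n, Polynomial.eval a (Polynomial.hasseDeriv s q) = 0) :
    (Polynomial.X - Polynomial.C a) ^ n ∣ q := by
  have h1 : (Polynomial.X : Polynomial R) ^ n ∣ Polynomial.taylor a q :=
    Polynomial.X_pow_dvd_iff.mpr fun d hd => by rw [Polynomial.taylor_coeff]; exact h d hd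
  obtain ⟨u, hu⟩ := h1
  have h2 : q = ((Polynomial.taylor a) q).comp (Polynomial.X - Polynomial.C a) := by
    rw [Polynomial.taylor_apply, Polynomial.comp_assoc]
    simp
  rw [h2, hu, Polynomial.mul_comp, Polynomial.pow_comp, Polynomial.X_comp]
  exact Dvd.intro _ rfl

lemma sum_rootMultiplicity_le {R : Type*} [CommRing R] [IsDomain R] {q : Polynomial R}
    (hq : q ≠ 0) (T : Finset R) :
    ∑ a ∈ T, q.rootMultiplicity a ≤ q.natDegree := by
  classical
  calc ∑ a ∈ T, q.rootMultiplicity a = ∑ a ∈ T, q.roots.count a := by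
        simp [Polynomial.count_roots]
    _ = ∑ a ∈ T ∩ q.roots.toFinset, q.roots.count a := by
        refine (Finset.sum_subset Finset.inter_subset_left ?_).symm
        intro x hx hx'
        rw [Multiset.count_eq_zero]
        intro hmem
        exact hx' (Finset.mem_inter.mpr ⟨hx, Multiset.mem_toFinset.mpr hmem⟩)
    _ ≤ ∑ a ∈ q.roots.toFinset, q.roots.count a :=
        Finset.sum_le_sum_of_subset Finset.inter_subset_right
    _ = Multiset.card q.roots := Multiset.toFinset_sum_count_eq _
    _ ≤ q.natDegree := Polynomial.card_roots' q

end Succ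

section PerPoint
open MvPolynomial
variable {F : Type*} [Field F] {m : ℕ}

lemma multAt_cons_le (f : MvPolynomial (Fin (m + 1)) F) (hf : f ≠ 0) (k : Fin m →₀ ℕ)
    (b : Fin m → F) (a₀ : F)
    (hq : Polynomial.map (MvPolynomial.eval b)
        (MvPolynomial.finSuccEquiv F m (hasseDeriv (Finsupp.cons 0 k) f)) ≠ 0) :
    multAt f (Fin.cons a₀ b) ≤ (∑ j, k j) +
      (Polynomial.map (MvPolynomial.eval b)
        (MvPolynomial.finSuccEquiv F m (hasseDeriv (Finsupp.cons 0 k) f))).rootMultiplicity a₀ := by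
  set q := Polynomial.map (MvPolynomial.eval b)
    (MvPolynomial.finSuccEquiv F m (hasseDeriv (Finsupp.cons 0 k) f)) with hqdef
  have hM := multAt_mem hf (Fin.cons a₀ b)
  set r := multAt f (Fin.cons a₀ b) with hrdef
  have hd : (Polynomial.X - Polynomial.C a₀) ^ (r - ∑ j, k j) ∣ q := by
    apply pow_X_sub_C_dvd
    intro s hs
    rw [hqdef, map_finSuccEquiv_hasseDeriv, ← MvPolynomial.eval_eq_eval_mv_eval']
    apply hM
    rw [Fin.sum_univ_succ]
    simp only [Finsupp.cons_zero, Finsupp.cons_succ]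
    omega
  have hle := (Polynomial.le_rootMultiplicity_iff hq).mpr hd
  omega

end PerPoint

section Helpers
open MvPolynomial
variable {F : Type*} {m : ℕ}

lemma lex_apply_zero_le_s9 {d i : Fin (m + 1) →₀ ℕ} (h : toLex d ≤ toLex i) : d 0 ≤ i 0 := by
  rcases (le_iff_eq_or_lt.mp h).imp id Finsupp.Lex.lt_iff.mp with heq | ⟨w, hw, hlt⟩
  · exact le_of_eq (congrFun (congrArg _ (toLex.injective heq)) 0)
  · rcases Fin.eq_zero_or_eq_succ w with rfl | ⟨w', rfl⟩
    · exact le_of_lt (by simpa using hlt)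
    · exact le_of_eq (by simpa using hw 0 (Fin.succ_pos w'))

lemma lex_cons_le_cons {y : ℕ} {d i' : Fin m →₀ ℕ}
    (h : toLex (Finsupp.cons y d) ≤ toLex (Finsupp.cons y i')) : toLex d ≤ toLex i' := by
  rcases (le_iff_eq_or_lt.mp h).imp id Finsupp.Lex.lt_iff.mp with heq | ⟨w, hw, hlt⟩
  · have hde : Finsupp.cons y d = Finsupp.cons y i' := toLex.injective heq
    have : d = i' := by
      rw [← Finsupp.tail_cons y d, ← Finsupp.tail_cons y i', hde]
    exact le_of_eq (congrArg _ this)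
  · rcases Fin.eq_zero_or_eq_succ w with rfl | ⟨w', rfl⟩
    · simp [Finsupp.cons_zero] at hlt
    · apply le_iff_eq_or_lt.mpr (Or.imp id Finsupp.Lex.lt_iff.mpr ?_)
      right
      refine ⟨w', fun j hj => ?_, ?_⟩
      · have := hw j.succ (by simpa [Fin.succ_lt_succ_iff] using hj)
        simpa [Finsupp.cons_succ] using this
      · simpa [Finsupp.cons_succ] using hlt

lemma sum_piFinset_cons [DecidableEq F] {M : Type*} [AddCommMonoid M]
    (S : Fin (m + 1) → Finset F) (g : (Fin (m + 1) → F) → M) :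
    ∑ p ∈ Fintype.piFinset S, g p
      = ∑ b ∈ Fintype.piFinset (fun l => S l.succ), ∑ a ∈ S 0, g (Fin.cons a b) := by
  rw [← Finset.sum_product']
  refine Finset.sum_bij' (fun p _ => (Fin.tail p, p 0)) (fun x _ => Fin.cons x.2 x.1)
    ?_ ?_ ?_ ?_ ?_
  · intro p hp
    rw [Fintype.mem_piFinset] at hp
    exact Finset.mem_product.mpr ⟨Fintype.mem_piFinset.mpr fun l => hp l.succ, hp 0⟩
  · intro x hx
    obtain ⟨hx1, hx2⟩ := Finset.mem_product.mp hx
    rw [Fintype.mem_piFinset] at hx1 ⊢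
    intro j
    refine Fin.cases ?_ (fun j' => ?_) j
    · simpa using hx2
    · simpa using hx1 j'
  · intro p _
    exact Fin.cons_self_tail p
  · intro x _
    ext <;> simp [Fin.tail_cons]
  · intro p _
    rw [Fin.cons_self_tail]

lemma prod_erase_eq_ite {n : ℕ} (c : Fin n → ℕ) (j : Fin n) :
    ∏ l ∈ Finset.univ.erase j, c l = ∏ l, if l ≠ j then c l else 1 := by
  rw [← Finset.filter_ne', Finset.prod_filter]

lemma prod_erase_zero (c : Fin (m + 1) → ℕ) :
    ∏ l ∈ Finset.univ.erase (0 : Fin (m + 1)), c l = ∏ l : Fin m, c l.succ := by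
  rw [prod_erase_eq_ite, Fin.prod_univ_succ]
  simp [Fin.succ_ne_zero]

lemma prod_erase_succ (c : Fin (m + 1) → ℕ) (j : Fin m) :
    ∏ l ∈ Finset.univ.erase j.succ, c l
      = c 0 * ∏ l ∈ Finset.univ.erase j, c l.succ := by
  rw [prod_erase_eq_ite, prod_erase_eq_ite, Fin.prod_univ_succ,
    if_pos (Ne.symm (Fin.succ_ne_zero j))]
  congr 1
  apply Finset.prod_congr rfl
  intro l _
  simp [Ne, Fin.succ_inj]

end Helpers

open MvPolynomial in
theorem key_bound {F : Type*} [Field F] [DecidableEq F] : ∀ (m : ℕ) (f : MvPolynomial (Fin m) F),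
    f ≠ 0 → ∀ i : Fin m →₀ ℕ, MvPolynomial.coeff i f ≠ 0 →
    (∀ d ∈ f.support, toLex d ≤ toLex i) → ∀ S : Fin m → Finset F,
    ∑ p ∈ Fintype.piFinset S, multAt f p
      ≤ ∑ j, i j * ∏ l ∈ Finset.univ.erase j, (S l).card := by
  intro m
  induction m with
  | zero =>
    intro f hf i hci hlead S
    have hz : ∀ p : Fin 0 → F, multAt f p = 0 := by
      intro p
      apply Nat.le_zero.mp
      have h00 : (0:ℕ) ∈ {r | HasMultAtLeast f p r} := hasMultAtLeast_zero f p
      apply csSup_le ⟨0, h00⟩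
      intro r hr
      by_contra hrc
      push_neg at hrc
      obtain ⟨c, rfl⟩ := MvPolynomial.C_surjective (Fin 0) f
      have h0 := hr (0 : Fin 0 →₀ ℕ) (by simpa using hrc)
      rw [hasseDeriv_zero_eq] at h0
      simp only [MvPolynomial.eval_C] at h0
      exact hf (by rw [h0, map_zero])
    simp only [hz, Finset.sum_const, smul_eq_mul, mul_zero]
    exact Nat.zero_le _
  | succ m ih =>
    intro f hf i hci hlead S
    set P := MvPolynomial.finSuccEquiv F m f with hPdef
    have hP0 : P ≠ 0 := fun h => hf ((MvPolynomial.finSuccEquiv F m).injective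
      (by rw [← hPdef, h, map_zero]))
    have hdeg0 : MvPolynomial.degreeOf 0 f = i 0 := by
      apply le_antisymm
      · exact MvPolynomial.degreeOf_le_iff.mpr fun d hd => lex_apply_zero_le_s9 (hlead d hd)
      · rw [MvPolynomial.degreeOf_eq_sup]
        exact Finset.le_sup (f := fun (d : Fin (m+1) →₀ ℕ) => d 0)
          (MvPolynomial.mem_support_iff.mpr hci)
    have hdP : P.natDegree = i 0 := by
      rw [hPdef, MvPolynomial.natDegree_finSuccEquiv]; exact hdeg0
    set i' := Finsupp.tail i with hi'def
    have hconsi : Finsupp.cons (i 0) i' = i := Finsupp.cons_tail i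
    set g := P.coeff (i 0) with hgdef
    have hcg : MvPolynomial.coeff i' g = MvPolynomial.coeff i f := by
      rw [hgdef, hPdef, MvPolynomial.finSuccEquiv_coeff_coeff, hconsi]
    have hg0 : g ≠ 0 := fun h => hci (by rw [← hcg, h, MvPolynomial.coeff_zero])
    have hleadg : ∀ d ∈ g.support, toLex d ≤ toLex i' := by
      intro d hd
      have hdc : MvPolynomial.coeff (Finsupp.cons (i 0) d) f ≠ 0 := by
        rw [← MvPolynomial.finSuccEquiv_coeff_coeff]
        exact MvPolynomial.mem_support_iff.mp hd
      have hld := hlead _ (MvPolynomial.mem_support_iff.mpr hdc)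
      rw [← hconsi] at hld
      exact lex_cons_le_cons hld
    have hIH := ih g hg0 i' (by rw [hcg]; exact hci) hleadg (fun l => S l.succ)
    have hbpt : ∀ b ∈ Fintype.piFinset (fun l => S l.succ),
        ∑ a ∈ S 0, multAt f (Fin.cons a b) ≤ (S 0).card * multAt g b + i 0 := by
      intro b _
      have hnot : ¬ HasMultAtLeast g b (multAt g b + 1) := by
        intro hc
        have := le_multAt hg0 hc
        omega
      rw [HasMultAtLeast] at hnot
      push_neg at hnot
      obtain ⟨k, hk1, hk2⟩ := hnot
      set q := Polynomial.map (MvPolynomial.eval b)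
        (MvPolynomial.finSuccEquiv F m (hasseDeriv (Finsupp.cons 0 k) f)) with hqdef
      have hqt : q.coeff (i 0) = MvPolynomial.eval b (hasseDeriv k g) := by
        rw [hqdef, Polynomial.coeff_map, finSuccEquiv_hasseDeriv_coeff,
          Polynomial.hasseDeriv_zero', hgdef, hPdef]
      have hq0 : q ≠ 0 := fun h => hk2 (by rw [← hqt, h, Polynomial.coeff_zero])
      have hqd : q.natDegree ≤ i 0 := by
        apply Polynomial.natDegree_le_iff_coeff_eq_zero.mpr
        intro N hN
        rw [hqdef, Polynomial.coeff_map, finSuccEquiv_hasseDeriv_coeff,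
          Polynomial.hasseDeriv_zero']
        have hPN : P.coeff N = 0 := Polynomial.coeff_eq_zero_of_natDegree_lt (by omega)
        rw [← hPdef, hPN, hasseDeriv_zero', map_zero]
      have hpt : ∀ a ∈ S 0, multAt f (Fin.cons a b) ≤ (∑ j, k j) + q.rootMultiplicity a :=
        fun a _ => multAt_cons_le f hf k b a hq0
      calc ∑ a ∈ S 0, multAt f (Fin.cons a b)
          ≤ ∑ a ∈ S 0, ((∑ j, k j) + q.rootMultiplicity a) := Finset.sum_le_sum hpt
        _ = (S 0).card * (∑ j, k j) + ∑ a ∈ S 0, q.rootMultiplicity a := by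
            rw [Finset.sum_add_distrib, Finset.sum_const, smul_eq_mul]
        _ ≤ (S 0).card * multAt g b + i 0 := by
            have h1 := sum_rootMultiplicity_le hq0 (S 0)
            have h2 : ∑ j, k j ≤ multAt g b := by omega
            have h3 := Nat.mul_le_mul_left (S 0).card h2
            omega
    rw [sum_piFinset_cons S (fun p => multAt f p)]
    calc ∑ b ∈ Fintype.piFinset (fun l => S l.succ), ∑ a ∈ S 0, multAt f (Fin.cons a b)
        ≤ ∑ b ∈ Fintype.piFinset (fun l => S l.succ), ((S 0).card * multAt g b + i 0) :=
          Finset.sum_le_sum hbpt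
      _ = (S 0).card * (∑ b ∈ Fintype.piFinset (fun l => S l.succ), multAt g b)
            + i 0 * ∏ l : Fin m, (S l.succ).card := by
          rw [Finset.sum_add_distrib, Finset.sum_const, smul_eq_mul, Finset.mul_sum,
            Fintype.card_piFinset]
          ring
      _ ≤ (S 0).card * (∑ j, i' j * ∏ l ∈ Finset.univ.erase j, (S l.succ).card)
            + i 0 * ∏ l : Fin m, (S l.succ).card := by
          have := Nat.mul_le_mul_left (S 0).card hIH
          omega
      _ = ∑ j, i j * ∏ l ∈ Finset.univ.erase j, (S l).card := by
          rw [Fin.sum_univ_succ, prod_erase_zero fun l => (S l).card]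
          have hsucc : ∀ j : Fin m, (∏ l ∈ Finset.univ.erase j.succ, (S l).card)
              = (S 0).card * ∏ l ∈ Finset.univ.erase j, (S l.succ).card :=
            fun j => prod_erase_succ (fun l => (S l).card) j
          simp_rw [hsucc]
          rw [Finset.mul_sum, add_comm]
          congr 1
          apply Finset.sum_congr rfl
          intro j _
          have ht : i' j = i j.succ := rfl
          rw [ht]
          ring

/-- **generalized Schwartz–Zippel.** If the leading monomial of a nonzero `f`
with respect to the lexicographic ordering (with `X_m ≺ ⋯ ≺ X_1`) is `X_1^{i_1} ⋯ X_m^{i_m}`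
and `r ≥ 1`, then the number of points of `S_1 × ⋯ × S_m` at which `f` has multiplicity at
least `r` is at most `(i_1 s_2 ⋯ s_m + s_1 i_2 s_3 ⋯ s_m + ⋯ + s_1 ⋯ s_{m−1} i_m)/r`. -/
theorem schwartz_zippel_multiplicity {F : Type*} [Field F] {m : ℕ}
    (f : MvPolynomial (Fin m) F) (hf : f ≠ 0) (i : Fin m →₀ ℕ)
    (hcoeff : MvPolynomial.coeff i f ≠ 0)
    (hlead : ∀ j ∈ f.support, toLex j ≤ toLex i)
    (S : Fin m → Finset F) (r : ℕ) (hr : 1 ≤ r) :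
    ({p : Fin m → F | p ∈ Fintype.piFinset S ∧ HasMultAtLeast f p r}.ncard : ℚ) ≤
      (∑ j, (i j : ℚ) * ∏ l ∈ Finset.univ.erase j, ((S l).card : ℚ)) / r := by
  classical
  set T := (Fintype.piFinset S).filter (fun p => HasMultAtLeast f p r) with hT
  have hset : {p : Fin m → F | p ∈ Fintype.piFinset S ∧ HasMultAtLeast f p r} = ↑T := by
    ext p
    simp [hT, Finset.mem_filter]
  rw [hset, Set.ncard_coe_finset]
  have h1 : T.card * r ≤ ∑ p ∈ Fintype.piFinset S, multAt f p := by
    calc T.card * r = ∑ _p ∈ T, r := by rw [Finset.sum_const, smul_eq_mul]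
      _ ≤ ∑ p ∈ T, multAt f p :=
          Finset.sum_le_sum fun p hp => le_multAt hf (Finset.mem_filter.mp hp).2
      _ ≤ ∑ p ∈ Fintype.piFinset S, multAt f p :=
          Finset.sum_le_sum_of_subset (Finset.filter_subset _ _)
  have h3 : T.card * r ≤ ∑ j, i j * ∏ l ∈ Finset.univ.erase j, (S l).card :=
    le_trans h1 (key_bound m f hf i hcoeff hlead S)
  have hrQ : (0:ℚ) < r := by exact_mod_cast Nat.lt_of_lt_of_le Nat.zero_lt_one hr
  rw [le_div_iff₀ hrQ]
  calc (T.card : ℚ) * r = ((T.card * r : ℕ) : ℚ) := by push_cast; ring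
    _ ≤ ((∑ j, i j * ∏ l ∈ Finset.univ.erase j, (S l).card : ℕ) : ℚ) := by exact_mod_cast h3
    _ = ∑ j, (i j : ℚ) * ∏ l ∈ Finset.univ.erase j, ((S l).card : ℚ) := by push_cast; rfl
end

section
/- With D defined recursively as D(i_1, r, s_1) = min{⌊i_1/r⌋, s_1} and D(i_1,...,i_m, r, s_1,...,s_m) = max_{(u_1,...,u_r) ∈ A(i_m,r,s_m)} [(s_m − Σu_j)·D(i_1,...,i_{m−1}, r, ...) + Σ_{k=1}^{r−1} u_k·D(i_1,...,i_{m−1}, r−k, ...) + u_r s_1⋯s_{m−1}], it holds that D(i_1,...,i_m, r, s_1,...,s_m) ≤ (i_1 s_2⋯s_m + s_1 i_2 s_3⋯s_m + ... + s_1⋯s_{m−1} i_m)/r. -/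
/-- The recursive bound `D(i_1, …, i_m, r, s_1, …, s_m)` of Geil–Thomsen.
For `m = 1`, `D(i_1, r, s_1) = min{⌊i_1/r⌋, s_1}`; for `m ≥ 2` it is the maximum over
`(u_1, …, u_r)` with `u_1 + ⋯ + u_r ≤ s_m` and `u_1 + 2u_2 + ⋯ + r·u_r ≤ i_m` of
`(s_m − u_1 − ⋯ − u_r)·D(i_1,…,i_{m−1}, r, s_1,…,s_{m−1})
  + ∑_{k=1}^{r−1} u_k·D(i_1,…,i_{m−1}, r−k, s_1,…,s_{m−1}) + u_r·s_1⋯s_{m−1}`. -/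
def D : (m : ℕ) → (Fin m → ℕ) → ℕ → (Fin m → ℕ) → ℕ
  | 0, _, _, _ => 1
  | 1, i, r, s => min (i 0 / r) (s 0)
  | (m + 2), i, r, s =>
      Finset.sup
        ((Fintype.piFinset fun _ : Fin r => Finset.range (s (Fin.last (m + 1)) + 1)).filter
          (fun u => (∑ k, u k) ≤ s (Fin.last (m + 1)) ∧
            (∑ k : Fin r, ((k : ℕ) + 1) * u k) ≤ i (Fin.last (m + 1))))
        (fun u =>
          (s (Fin.last (m + 1)) - ∑ k, u k) *
              D (m + 1) (fun j => i j.castSucc) r (fun j => s j.castSucc) +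
            ∑ k : Fin r, u k *
              (if (k : ℕ) + 1 = r then ∏ j : Fin (m + 1), s j.castSucc
               else D (m + 1) (fun j => i j.castSucc) (r - ((k : ℕ) + 1))
                 (fun j => s j.castSucc)))

lemma D_le_prod : ∀ (m : ℕ) (i : Fin m → ℕ) (r : ℕ) (s : Fin m → ℕ), D m i r s ≤ ∏ j, s j
  | 0, i, r, s => by simp [D]
  | 1, i, r, s => by simpa [D] using min_le_right _ _
  | (m + 2), i, r, s => by
    rw [D]
    apply Finset.sup_le
    intro u hu
    rw [Finset.mem_filter] at hu
    obtain ⟨-, h1, h2⟩ := hu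
    have hP : ∀ k : Fin r,
        (if (k : ℕ) + 1 = r then ∏ j : Fin (m + 1), s j.castSucc
         else D (m + 1) (fun j => i j.castSucc) (r - ((k : ℕ) + 1)) (fun j => s j.castSucc))
        ≤ ∏ j : Fin (m + 1), s j.castSucc := by
      intro k
      split
      · exact le_rfl
      · exact D_le_prod (m + 1) _ _ _
    calc (s (Fin.last (m + 1)) - ∑ k, u k) *
              D (m + 1) (fun j => i j.castSucc) r (fun j => s j.castSucc) +
            ∑ k : Fin r, u k *
              (if (k : ℕ) + 1 = r then ∏ j : Fin (m + 1), s j.castSucc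
               else D (m + 1) (fun j => i j.castSucc) (r - ((k : ℕ) + 1))
                 (fun j => s j.castSucc))
        ≤ (s (Fin.last (m + 1)) - ∑ k, u k) * ∏ j : Fin (m + 1), s j.castSucc +
            ∑ k : Fin r, u k * ∏ j : Fin (m + 1), s j.castSucc := by
          gcongr with k
          · exact D_le_prod (m + 1) _ _ _
          · exact hP k
      _ = ((s (Fin.last (m + 1)) - ∑ k, u k) + ∑ k, u k) * ∏ j : Fin (m + 1), s j.castSucc := by
          rw [add_mul, Finset.sum_mul]
      _ = s (Fin.last (m + 1)) * ∏ j : Fin (m + 1), s j.castSucc := by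
          rw [Nat.sub_add_cancel h1]
      _ = ∏ j : Fin (m + 2), s j := by
          conv_rhs => rw [Fin.prod_univ_castSucc]
          ring

lemma prod_erase_div {n : ℕ} (x : Fin n → ℚ) (j : Fin n) (hx : x j ≠ 0) :
    ∏ l ∈ Finset.univ.erase j, x l = (∏ l, x l) / x j := by
  rw [eq_div_iff hx, mul_comm, Finset.mul_prod_erase _ _ (Finset.mem_univ j)]

lemma cast_sup_le {α : Type*} (S : Finset α) (f : α → ℕ) (c : ℚ) (hc : 0 ≤ c)
    (h : ∀ b ∈ S, (f b : ℚ) ≤ c) : ((S.sup f : ℕ) : ℚ) ≤ c := by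
  rcases S.eq_empty_or_nonempty with h0 | hne
  · simpa [h0] using hc
  · obtain ⟨b, hb, he⟩ := Finset.exists_mem_eq_sup S hne f
    rw [he]; exact h b hb

lemma rhs_split (m : ℕ) (i s : Fin (m + 2) → ℕ) (hs : ∀ j, 1 ≤ s j) :
    ∑ j : Fin (m + 2), (i j : ℚ) * ∏ l ∈ Finset.univ.erase j, (s l : ℚ) =
      (s (Fin.last (m + 1)) : ℚ) *
          (∑ j : Fin (m + 1), (i j.castSucc : ℚ) *
            ∏ l ∈ Finset.univ.erase j, (s l.castSucc : ℚ)) +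
        (i (Fin.last (m + 1)) : ℚ) * ∏ j : Fin (m + 1), (s j.castSucc : ℚ) := by
  have hsq : ∀ j : Fin (m + 2), (0 : ℚ) < s j := fun j => by exact_mod_cast hs j
  have h1 : ∀ j : Fin (m + 2), ∏ l ∈ Finset.univ.erase j, (s l : ℚ) =
      (∏ l, (s l : ℚ)) / (s j : ℚ) := fun j => prod_erase_div _ j (hsq j).ne'
  have h2 : ∀ j : Fin (m + 1), ∏ l ∈ Finset.univ.erase j, ((s l.castSucc : ℚ)) =
      (∏ l : Fin (m + 1), (s l.castSucc : ℚ)) / (s j.castSucc : ℚ) :=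
    fun j => prod_erase_div _ j (hsq j.castSucc).ne'
  have hStot : (∏ l : Fin (m + 2), (s l : ℚ)) =
      (∏ j : Fin (m + 1), (s j.castSucc : ℚ)) * (s (Fin.last (m + 1)) : ℚ) := by
    rw [Fin.prod_univ_castSucc]
  simp only [h1, h2, hStot]
  rw [Fin.sum_univ_castSucc, Finset.mul_sum]
  congr 1
  · exact Finset.sum_congr rfl fun j _ => by ring
  · rw [mul_div_assoc, div_self (hsq (Fin.last (m + 1))).ne', mul_one]

lemma key (m : ℕ) (i' s' : Fin (m + 1) → ℕ) (r slast ilast : ℕ) (hr : 1 ≤ r)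
    (hs' : ∀ j, 1 ≤ s' j) (hslast : 1 ≤ slast)
    (hIH : ∀ r', 1 ≤ r' → (D (m + 1) i' r' s' : ℚ) ≤
      (∑ j, (i' j : ℚ) * ∏ l ∈ Finset.univ.erase j, (s' l : ℚ)) / r')
    (u : Fin r → ℕ) (h1 : ∑ k, u k ≤ slast)
    (h2 : ∑ k : Fin r, ((k : ℕ) + 1) * u k ≤ ilast) :
    (((slast - ∑ k, u k) * D (m + 1) i' r s' +
        ∑ k : Fin r, u k * (if (k : ℕ) + 1 = r then ∏ j, s' j
          else D (m + 1) i' (r - ((k : ℕ) + 1)) s') : ℕ) : ℚ) ≤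
      ((slast : ℚ) * (∑ j, (i' j : ℚ) * ∏ l ∈ Finset.univ.erase j, (s' l : ℚ)) +
        (ilast : ℚ) * ∏ j, (s' j : ℚ)) / r := by
  set T : ℚ := ∑ j, (i' j : ℚ) * ∏ l ∈ Finset.univ.erase j, (s' l : ℚ) with hTdef
  set P : ℚ := ∏ j, (s' j : ℚ) with hPdef
  have hr0 : (0 : ℚ) < r := by exact_mod_cast hr
  have hsq : ∀ j, (0 : ℚ) < (s' j : ℚ) := fun j => by exact_mod_cast hs' j
  have hP0 : 0 < P := Finset.prod_pos fun j _ => hsq j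
  have hT0 : 0 ≤ T := Finset.sum_nonneg fun j _ => by
    exact mul_nonneg (by positivity) (Finset.prod_nonneg fun l _ => by positivity)
  have hDP : ∀ r', (D (m + 1) i' r' s' : ℚ) ≤ P := by
    intro r'
    calc (D (m + 1) i' r' s' : ℚ) ≤ ((∏ j, s' j : ℕ) : ℚ) := by
          exact_mod_cast D_le_prod (m + 1) i' r' s'
      _ = P := by push_cast [hPdef]; rfl
  -- each term bound
  have hterm : ∀ k : Fin r,
      ((if (k : ℕ) + 1 = r then ∏ j, s' j
        else D (m + 1) i' (r - ((k : ℕ) + 1)) s' : ℕ) : ℚ) ≤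
        (T + (((k : ℕ) : ℚ) + 1) * P) / r := by
    intro k
    rw [le_div_iff₀ hr0]
    split
    next h =>
      have hPe : ((∏ j, s' j : ℕ) : ℚ) = P := by push_cast [hPdef]; rfl
      rw [hPe]
      have : (((k : ℕ) : ℚ) + 1) = (r : ℚ) := by exact_mod_cast h
      rw [this]
      nlinarith
    next h =>
      have hk : (k : ℕ) + 1 < r := lt_of_le_of_ne k.isLt h
      set r' := r - ((k : ℕ) + 1) with hr'def
      have hr'1 : 1 ≤ r' := by omega
      have hr'0 : (0 : ℚ) < (r' : ℚ) := by exact_mod_cast hr'1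
      have hrr : ((r' : ℚ)) + (((k : ℕ) : ℚ) + 1) = (r : ℚ) := by
        have : r' + ((k : ℕ) + 1) = r := by omega
        exact_mod_cast this
      rcases le_or_gt T ((r' : ℚ) * P) with hc | hc
      · have hD := hIH r' hr'1
        calc (D (m + 1) i' r' s' : ℚ) * r ≤ (T / (r' : ℚ)) * r := by
              apply mul_le_mul_of_nonneg_right hD hr0.le
          _ ≤ T + (((k : ℕ) : ℚ) + 1) * P := by
              rw [div_mul_eq_mul_div, div_le_iff₀ hr'0, ← hrr]
              have hkpos : (0 : ℚ) ≤ ((k : ℕ) : ℚ) + 1 := by positivity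
              nlinarith [mul_le_mul_of_nonneg_left hc hkpos]
      · calc (D (m + 1) i' r' s' : ℚ) * r ≤ P * r := by
              apply mul_le_mul_of_nonneg_right (hDP r') hr0.le
          _ ≤ T + (((k : ℕ) : ℚ) + 1) * P := by
              rw [← hrr]; nlinarith
  -- main chain
  have hDr := hIH r hr
  have hcast : (((slast - ∑ k, u k) * D (m + 1) i' r s' +
      ∑ k : Fin r, u k * (if (k : ℕ) + 1 = r then ∏ j, s' j
        else D (m + 1) i' (r - ((k : ℕ) + 1)) s') : ℕ) : ℚ) =
      ((slast : ℚ) - ∑ k, (u k : ℚ)) * (D (m + 1) i' r s' : ℚ) +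
        ∑ k : Fin r, (u k : ℚ) *
          ((if (k : ℕ) + 1 = r then ∏ j, s' j
            else D (m + 1) i' (r - ((k : ℕ) + 1)) s' : ℕ) : ℚ) := by
    push_cast [Nat.cast_sub h1]
    ring
  rw [hcast]
  have hsub : (0 : ℚ) ≤ (slast : ℚ) - ∑ k, (u k : ℚ) := by
    have : ((∑ k, u k : ℕ) : ℚ) ≤ (slast : ℚ) := by exact_mod_cast h1
    push_cast at this
    linarith
  calc ((slast : ℚ) - ∑ k, (u k : ℚ)) * (D (m + 1) i' r s' : ℚ) +
        ∑ k : Fin r, (u k : ℚ) *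
          ((if (k : ℕ) + 1 = r then ∏ j, s' j
            else D (m + 1) i' (r - ((k : ℕ) + 1)) s' : ℕ) : ℚ)
      ≤ ((slast : ℚ) - ∑ k, (u k : ℚ)) * (T / r) +
        ∑ k : Fin r, (u k : ℚ) * ((T + (((k : ℕ) : ℚ) + 1) * P) / r) := by
        exact add_le_add (mul_le_mul_of_nonneg_left hDr hsub)
          (Finset.sum_le_sum fun k _ => mul_le_mul_of_nonneg_left (hterm k) (by positivity))
    _ = ((slast : ℚ) * T + (∑ k : Fin r, ((((k : ℕ) : ℚ) + 1) * (u k : ℚ))) * P) / r := by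
        have hsplit : ∀ k ∈ (Finset.univ : Finset (Fin r)),
            (u k : ℚ) * ((T + (((k : ℕ) : ℚ) + 1) * P) / r) =
            ((u k : ℚ) * T + (((k : ℕ) : ℚ) + 1) * (u k : ℚ) * P) / r := fun k _ => by
          ring
        rw [Finset.sum_congr rfl hsplit, ← Finset.sum_div, ← mul_div_assoc,
          ← add_div, Finset.sum_add_distrib, ← Finset.sum_mul, ← Finset.sum_mul]
        congr 1
        ring
    _ ≤ ((slast : ℚ) * T + (ilast : ℚ) * P) / r := by
        have hW : (∑ k : Fin r, ((((k : ℕ) : ℚ) + 1) * (u k : ℚ))) ≤ (ilast : ℚ) := by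
          exact_mod_cast h2
        gcongr

lemma D_le_sz : ∀ (m : ℕ), 1 ≤ m → ∀ (i : Fin m → ℕ) (r : ℕ), 1 ≤ r → ∀ (s : Fin m → ℕ),
    (∀ j, 1 ≤ s j) →
    (D m i r s : ℚ) ≤ (∑ j, (i j : ℚ) * ∏ l ∈ Finset.univ.erase j, (s l : ℚ)) / r
  | 0, hm, _, _, _, _, _ => absurd hm (by omega)
  | 1, _, i, r, hr, s, hs => by
      have h1 : (∑ j : Fin 1, (i j : ℚ) * ∏ l ∈ Finset.univ.erase j, (s l : ℚ)) = (i 0 : ℚ) := by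
        simp
      rw [h1, D]
      calc ((min (i 0 / r) (s 0) : ℕ) : ℚ) ≤ ((i 0 / r : ℕ) : ℚ) := by
            exact_mod_cast min_le_left _ _
        _ ≤ (i 0 : ℚ) / r := Nat.cast_div_le
  | (m + 2), _, i, r, hr, s, hs => by
      rw [rhs_split m i s hs, D]
      apply cast_sup_le
      · have hT0 : (0 : ℚ) ≤ ∑ j : Fin (m + 1), (i j.castSucc : ℚ) *
            ∏ l ∈ Finset.univ.erase j, (s l.castSucc : ℚ) :=
          Finset.sum_nonneg fun j _ =>
            mul_nonneg (by positivity) (Finset.prod_nonneg fun l _ => by positivity)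
        have hP0 : (0 : ℚ) ≤ ∏ j : Fin (m + 1), (s j.castSucc : ℚ) :=
          Finset.prod_nonneg fun l _ => by positivity
        have hr0 : (0 : ℚ) ≤ (r : ℚ) := by positivity
        exact div_nonneg (add_nonneg (mul_nonneg (by positivity) hT0)
          (mul_nonneg (by positivity) hP0)) hr0
      · intro u hu
        rw [Finset.mem_filter] at hu
        obtain ⟨-, hu1, hu2⟩ := hu
        exact key m (fun j => i j.castSucc) (fun j => s j.castSucc) r
          (s (Fin.last (m + 1))) (i (Fin.last (m + 1))) hr (fun j => hs _) (hs _)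
          (fun r' hr' => D_le_sz (m + 1) (by omega) _ r' hr' _ (fun j => hs _)) u hu1 hu2


/-- The recursive bound `D` is at least as good as the Schwartz–Zippel
bound: `D(i_1, …, i_m, r, s_1, …, s_m) ≤ (i_1 s_2 ⋯ s_m + ⋯ + s_1 ⋯ s_{m−1} i_m)/r`. -/
theorem D_le_schwartz_zippel {m : ℕ} (hm : 1 ≤ m) (i : Fin m → ℕ) (r : ℕ) (hr : 1 ≤ r)
    (s : Fin m → ℕ) (hs : ∀ j, 1 ≤ s j) :
    (D m i r s : ℚ) ≤
      (∑ j, (i j : ℚ) * ∏ l ∈ Finset.univ.erase j, (s l : ℚ)) / r :=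
  D_le_sz m hm i r hr s hs
end

section
/- Let F ∈ F[X_1, X_2] be nonzero with leading monomial X_1^{i_1} X_2^{i_2} with respect to the lexicographic ordering with X_2 ≺ X_1, and let S_1, S_2 be finite sets of sizes s_1, s_2. If s_1(r−1) ≤ i_1 < s_1 r and 0 ≤ i_2 < s_2, then the number of points of S_1 × S_2 at which F has multiplicity at least r is at most s_2·⌊i_1/r⌋ + i_2·(s_1 − ⌊i_1/r⌋). -/
section Aux

open Polynomial

variable {F : Type*} [Field F]

/-- The restriction of `f` to the row `X₂ = b`, as a univariate polynomial in `X₁`. -/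
noncomputable def Urow (f : MvPolynomial (Fin 2) F) (b : F) : Polynomial F :=
  MvPolynomial.eval₂ Polynomial.C ![Polynomial.X, Polynomial.C b] f

lemma coeff_Urow (f : MvPolynomial (Fin 2) F) (b : F) (m : ℕ) :
    (Urow f b).coeff m =
      ∑ k ∈ f.support.filter (fun k => k 0 = m), MvPolynomial.coeff k f * b ^ (k 1) := by
  rw [Urow, MvPolynomial.eval₂_eq', Polynomial.finset_sum_coeff, Finset.sum_filter]
  refine Finset.sum_congr rfl fun k _ => ?_
  have h2 : (∏ j : Fin 2, (![Polynomial.X, Polynomial.C b] j) ^ k j)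
      = Polynomial.X ^ (k 0) * Polynomial.C (b ^ (k 1)) := by
    rw [Fin.prod_univ_two]
    simp [map_pow]
  have h3 : Polynomial.C (MvPolynomial.coeff k f) *
      (Polynomial.X ^ (k 0) * Polynomial.C (b ^ (k 1)))
      = Polynomial.C (MvPolynomial.coeff k f * b ^ (k 1)) * Polynomial.X ^ (k 0) := by
    rw [map_mul]; ring
  rw [h2, h3, Polynomial.coeff_C_mul, Polynomial.coeff_X_pow]
  by_cases hk : k 0 = m
  · simp [hk]
  · simp [hk, Ne.symm hk]

lemma eval_hasseDeriv_eq (f : MvPolynomial (Fin 2) F) (p : Fin 2 → F) (k : Fin 2 →₀ ℕ) :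
    MvPolynomial.eval p (hasseDeriv k f) =
      MvPolynomial.coeff k
        (MvPolynomial.eval₂ MvPolynomial.C
          (fun j => MvPolynomial.X j + MvPolynomial.C (p j)) f) := by
  unfold _root_.hasseDeriv
  rw [← MvPolynomial.coeff_map]
  congr 1
  rw [MvPolynomial.eval₂_comp_left (MvPolynomial.map (MvPolynomial.eval p))]
  congr 1
  · ext c
    simp
  · funext j
    simp

lemma coeff_proj (G : MvPolynomial (Fin 2) F) (d : ℕ) :
    (MvPolynomial.eval₂ Polynomial.C ![Polynomial.X, 0] G).coeff d =
      MvPolynomial.coeff (Finsupp.single 0 d) G := by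
  rw [MvPolynomial.eval₂_eq', Polynomial.finset_sum_coeff]
  have key : ∀ k : Fin 2 →₀ ℕ,
      (Polynomial.C (MvPolynomial.coeff k G) *
        ∏ j : Fin 2, (![Polynomial.X, 0] j) ^ k j).coeff d
      = if k = Finsupp.single 0 d then MvPolynomial.coeff k G else 0 := by
    intro k
    rw [Fin.prod_univ_two]
    simp only [Matrix.cons_val_zero, Matrix.cons_val_one, Matrix.head_cons]
    by_cases h1 : k 1 = 0
    · rw [h1, pow_zero, mul_one, Polynomial.coeff_C_mul, Polynomial.coeff_X_pow]
      by_cases h0 : k 0 = d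
      · have hk : k = Finsupp.single 0 d := by
          ext j
          fin_cases j <;> simp [h0, h1, Finsupp.single_apply]
        simp [hk, h0]
      · have hk : k ≠ Finsupp.single 0 d := by
          intro hkk
          exact h0 (by rw [hkk]; simp)
        simp [hk, Ne.symm h0]
    · have hz : (0 : Polynomial F) ^ (k 1) = 0 := zero_pow h1
      have hk : k ≠ Finsupp.single 0 d := by
        intro hkk
        apply h1
        rw [hkk]
        simp
      simp [hz, hk]
  rw [Finset.sum_congr rfl (fun k _ => key k), Finset.sum_ite_eq' G.support]
  by_cases hs : Finsupp.single (0 : Fin 2) d ∈ G.support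
  · simp [hs]
  · simp [hs, MvPolynomial.notMem_support_iff.mp hs]

lemma key_dvd (f : MvPolynomial (Fin 2) F) (r : ℕ) (p : Fin 2 → F)
    (h : HasMultAtLeast f p r) :
    (Polynomial.X - Polynomial.C (p 0)) ^ r ∣ Urow f (p 1) := by
  set a := p 0 with ha
  set b := p 1 with hb
  have hG : ∀ d : ℕ, (MvPolynomial.eval₂ Polynomial.C
      ![Polynomial.X + Polynomial.C a, Polynomial.C b] f).coeff d
      = MvPolynomial.eval p (hasseDeriv (Finsupp.single 0 d) f) := by
    intro d
    rw [eval_hasseDeriv_eq]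
    rw [← coeff_proj (MvPolynomial.eval₂ MvPolynomial.C
      (fun j => MvPolynomial.X j + MvPolynomial.C (p j)) f) d]
    congr 1
    have hcomp := MvPolynomial.eval₂_comp_left
      (MvPolynomial.eval₂Hom (Polynomial.C : F →+* Polynomial F) ![Polynomial.X, 0])
      (MvPolynomial.C : F →+* MvPolynomial (Fin 2) F)
      (fun j => MvPolynomial.X j + MvPolynomial.C (p j)) f
    simp only [MvPolynomial.coe_eval₂Hom] at hcomp
    rw [hcomp]
    congr 1
    · ext c
      simp
    · funext j
      fin_cases j <;> simp [ha, hb]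
  have htay : Polynomial.taylor a (Urow f b) = MvPolynomial.eval₂ Polynomial.C
      ![Polynomial.X + Polynomial.C a, Polynomial.C b] f := by
    have h1 : Polynomial.taylor a (Urow f b)
        = Polynomial.eval₂RingHom Polynomial.C (Polynomial.X + Polynomial.C a) (Urow f b) := by
      rw [Polynomial.taylor_apply]
      rfl
    rw [h1, Urow, MvPolynomial.eval₂_comp_left]
    congr 1
    · ext c
      simp
    · funext j
      fin_cases j <;> simp
  have hXdvd : Polynomial.X ^ r ∣ Polynomial.taylor a (Urow f b) := by
    rw [Polynomial.X_pow_dvd_iff]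
    intro d hd
    rw [htay, hG d]
    apply h
    have hsum : (∑ j, (Finsupp.single (0 : Fin 2) d) j) = d := by
      rw [Fin.sum_univ_two]
      simp
    rw [hsum]
    exact hd
  obtain ⟨w, hw⟩ := hXdvd
  have hu : Urow f b = (Polynomial.X - Polynomial.C a) ^ r * Polynomial.taylor (-a) w := by
    have h2 : Polynomial.taylor (-a) (Polynomial.taylor a (Urow f b)) = Urow f b := by
      rw [Polynomial.taylor_taylor]
      simp
    rw [← h2, hw, Polynomial.taylor_mul]
    congr 1
    rw [Polynomial.taylor_apply, Polynomial.pow_comp, Polynomial.X_comp]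
    rw [map_neg]
    ring
  exact ⟨Polynomial.taylor (-a) w, hu⟩

lemma card_mul_le_natDegree (u : Polynomial F) (hu : u ≠ 0) (t : Finset F) (r : ℕ)
    (h : ∀ x ∈ t, (Polynomial.X - Polynomial.C x) ^ r ∣ u) :
    r * t.card ≤ u.natDegree := by
  classical
  have hle : (r • t.val) ≤ u.roots := by
    rw [Multiset.le_iff_count]
    intro x
    rw [Multiset.count_nsmul, Polynomial.count_roots]
    by_cases hx : x ∈ t
    · rw [Multiset.count_eq_one_of_mem t.nodup hx, mul_one]
      exact (Polynomial.le_rootMultiplicity_iff hu).mpr (h x hx)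
    · rw [Multiset.count_eq_zero_of_notMem hx, mul_zero]
      exact Nat.zero_le _
  calc r * t.card = Multiset.card (r • t.val) := by rw [Multiset.card_nsmul]; rfl
    _ ≤ Multiset.card u.roots := Multiset.card_le_card hle
    _ ≤ u.natDegree := Polynomial.card_roots' u

lemma lex_facts {k i : Fin 2 →₀ ℕ} (h : toLex k ≤ toLex i) :
    k 0 ≤ i 0 ∧ (k 0 = i 0 → k 1 ≤ i 1) := by
  rcases eq_or_lt_of_le h with he | hlt
  · have : k = i := toLex.injective he
    subst this
    exact ⟨le_refl _, fun _ => le_refl _⟩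
  · obtain ⟨j, hj1, hj2⟩ := Finsupp.lex_def.mp hlt
    fin_cases j
    · exact ⟨le_of_lt hj2, fun he2 => absurd he2 (ne_of_lt hj2)⟩
    · have h0 : k 0 = i 0 := hj1 0 (by decide)
      exact ⟨le_of_eq h0, fun _ => le_of_lt hj2⟩

end Aux

/-- **case (C.4).** Let `f ∈ F[X_1,X_2]` be nonzero with leading monomial
`X_1^{i_1} X_2^{i_2}` with respect to the lexicographic ordering with `X_2 ≺ X_1`. If
`s_1(r−1) ≤ i_1 < s_1 r` and `i_2 < s_2`, then the number of points of `S_1 × S_2` at which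
`f` has multiplicity at least `r` is at most `s_2 ⌊i_1/r⌋ + i_2 (s_1 − ⌊i_1/r⌋)`. -/
theorem two_var_closed_formula_C4 {F : Type*} [Field F]
    (f : MvPolynomial (Fin 2) F) (hf : f ≠ 0) (i : Fin 2 →₀ ℕ)
    (hcoeff : MvPolynomial.coeff i f ≠ 0)
    (hlead : ∀ j ∈ f.support, toLex j ≤ toLex i)
    (S : Fin 2 → Finset F) (r : ℕ) (hr : 1 ≤ r)
    (h1 : (S 0).card * (r - 1) ≤ i 0) (h2 : i 0 < (S 0).card * r)
    (h3 : i 1 < (S 1).card) :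
    {p : Fin 2 → F | p ∈ Fintype.piFinset S ∧ HasMultAtLeast f p r}.ncard ≤
      (S 1).card * (i 0 / r) + i 1 * ((S 0).card - i 0 / r) := by
  classical
  have hr0 : 0 < r := hr
  have hfacts : ∀ k ∈ f.support, k 0 ≤ i 0 ∧ (k 0 = i 0 → k 1 ≤ i 1) :=
    fun k hk => lex_facts (hlead k hk)
  set c : Polynomial F := ∑ k ∈ f.support.filter (fun k => k 0 = i 0),
    Polynomial.monomial (k 1) (MvPolynomial.coeff k f) with hc
  have hceval : ∀ b : F, Polynomial.eval b c = (Urow f b).coeff (i 0) := by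
    intro b
    rw [coeff_Urow, hc, Polynomial.eval_finset_sum]
    exact Finset.sum_congr rfl fun k _ => by rw [Polynomial.eval_monomial]
  have hcne : c ≠ 0 := by
    intro h0
    apply hcoeff
    have hcc : c.coeff (i 1) = MvPolynomial.coeff i f := by
      rw [hc, Polynomial.finset_sum_coeff]
      rw [Finset.sum_eq_single i]
      · rw [Polynomial.coeff_monomial, if_pos rfl]
      · intro k hk hne
        rw [Polynomial.coeff_monomial, if_neg]
        intro h11
        apply hne
        have hk0 : k 0 = i 0 := (Finset.mem_filter.mp hk).2
        ext j
        fin_cases j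
        exacts [hk0, h11]
      · intro hnotmem
        exfalso
        apply hnotmem
        rw [Finset.mem_filter]
        exact ⟨MvPolynomial.mem_support_iff.mpr hcoeff, rfl⟩
    rw [← hcc, h0, Polynomial.coeff_zero]
  have hcdeg : c.natDegree ≤ i 1 := by
    rw [hc]
    apply Polynomial.natDegree_sum_le_of_forall_le
    intro k hk
    refine le_trans (Polynomial.natDegree_monomial_le _) ?_
    obtain ⟨hk1, hk2⟩ := Finset.mem_filter.mp hk
    exact (hfacts k hk1).2 hk2
  have hUdeg : ∀ b : F, (Urow f b).natDegree ≤ i 0 := by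
    intro b
    rw [Polynomial.natDegree_le_iff_coeff_eq_zero]
    intro N hN
    rw [coeff_Urow]
    apply Finset.sum_eq_zero
    intro k hk
    obtain ⟨hk1, hk2⟩ := Finset.mem_filter.mp hk
    exfalso
    have := (hfacts k hk1).1
    omega
  set Z := (Fintype.piFinset S).filter (fun p => HasMultAtLeast f p r) with hZ
  have hsetZ : {p : Fin 2 → F | p ∈ Fintype.piFinset S ∧ HasMultAtLeast f p r} = ↑Z := by
    ext p
    simp [hZ]
  rw [hsetZ, Set.ncard_coe_finset]
  have hmap : ∀ p ∈ Z, p 1 ∈ S 1 := by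
    intro p hp
    rw [hZ, Finset.mem_filter] at hp
    exact (Fintype.mem_piFinset.mp hp.1) 1
  rw [Finset.card_eq_sum_card_fiberwise hmap]
  have hinj : ∀ b : F, Set.InjOn (fun p : Fin 2 → F => p 0)
      ↑(Z.filter (fun p => p 1 = b)) := by
    intro b p hp p' hp' hpp
    simp only [Finset.coe_filter, Set.mem_setOf_eq] at hp hp'
    have h0 : p 0 = p' 0 := hpp
    have h1' : p 1 = p' 1 := by rw [hp.2, hp'.2]
    funext j
    fin_cases j
    · exact h0
    · exact h1' 
  have fibS : ∀ b : F, (Z.filter (fun p => p 1 = b)).card ≤ (S 0).card := by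
    intro b
    apply Finset.card_le_card_of_injOn (fun p => p 0) ?_ (hinj b)
    intro p hp
    rw [Finset.mem_coe, Finset.mem_filter] at hp
    have hp1 := hp.1
    rw [hZ, Finset.mem_filter] at hp1
    exact (Fintype.mem_piFinset.mp hp1.1) 0
  have fibG : ∀ b : F, Polynomial.eval b c ≠ 0 →
      (Z.filter (fun p => p 1 = b)).card ≤ i 0 / r := by
    intro b hbne
    have hUne : Urow f b ≠ 0 := by
      intro h0
      apply hbne
      rw [hceval b, h0, Polynomial.coeff_zero]
    set t : Finset F := (Z.filter (fun p => p 1 = b)).image (fun p => p 0) with ht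
    have hcard : t.card = (Z.filter (fun p => p 1 = b)).card :=
      Finset.card_image_of_injOn (hinj b)
    have hdvd : ∀ x ∈ t, (Polynomial.X - Polynomial.C x) ^ r ∣ Urow f b := by
      intro x hx
      rw [ht, Finset.mem_image] at hx
      obtain ⟨p, hp, hpx⟩ := hx
      rw [Finset.mem_filter] at hp
      obtain ⟨hpz, hp1⟩ := hp
      rw [hZ, Finset.mem_filter] at hpz
      have hkd := key_dvd f r p hpz.2
      rw [hpx, hp1] at hkd
      exact hkd
    have hle := card_mul_le_natDegree (Urow f b) hUne t r hdvd
    rw [hcard, mul_comm] at hle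
    exact (Nat.le_div_iff_mul_le hr0).mpr (le_trans hle (hUdeg b))
  set β := ((S 1).filter (fun b => Polynomial.eval b c = 0)).card with hβ
  have hβle : β ≤ i 1 := by
    have hsub : (S 1).filter (fun b => Polynomial.eval b c = 0) ⊆ c.roots.toFinset := by
      intro b hb
      rw [Finset.mem_filter] at hb
      rw [Multiset.mem_toFinset, Polynomial.mem_roots hcne]
      exact hb.2
    calc β ≤ c.roots.toFinset.card := Finset.card_le_card hsub
      _ ≤ Multiset.card c.roots := Multiset.toFinset_card_le _
      _ ≤ c.natDegree := Polynomial.card_roots' c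
      _ ≤ i 1 := hcdeg
  have hβs2 : β ≤ (S 1).card := Finset.card_filter_le _ _
  have hq : i 0 / r < (S 0).card := (Nat.div_lt_iff_lt_mul hr0).mpr h2
  calc ∑ b ∈ S 1, (Z.filter (fun p => p 1 = b)).card
      ≤ β * (S 0).card + ((S 1).card - β) * (i 0 / r) := by
        rw [← Finset.sum_filter_add_sum_filter_not (S 1)
          (fun b => Polynomial.eval b c = 0)]
        apply Nat.add_le_add
        · calc ∑ b ∈ (S 1).filter (fun b => Polynomial.eval b c = 0),
              (Z.filter (fun p => p 1 = b)).card
              ≤ ∑ _b ∈ (S 1).filter (fun b => Polynomial.eval b c = 0), (S 0).card :=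
                Finset.sum_le_sum (fun b _ => fibS b)
            _ = β * (S 0).card := by rw [Finset.sum_const, smul_eq_mul]
        · have hcnt := Finset.card_filter_add_card_filter_not
            (s := S 1) (p := fun b => Polynomial.eval b c = 0)
          calc ∑ b ∈ (S 1).filter (fun b => ¬ Polynomial.eval b c = 0),
              (Z.filter (fun p => p 1 = b)).card
              ≤ ∑ b ∈ (S 1).filter (fun b => ¬ Polynomial.eval b c = 0), (i 0 / r) :=
                Finset.sum_le_sum (fun b hb => fibG b (Finset.mem_filter.mp hb).2)
            _ = ((S 1).filter (fun b => ¬ Polynomial.eval b c = 0)).card * (i 0 / r) := by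
                rw [Finset.sum_const, smul_eq_mul]
            _ = ((S 1).card - β) * (i 0 / r) := by
                congr 1
                omega
    _ ≤ (S 1).card * (i 0 / r) + i 1 * ((S 0).card - i 0 / r) := by
        have hqle : i 0 / r ≤ (S 0).card := le_of_lt hq
        have hkey : β * (S 0).card + ((S 1).card - β) * (i 0 / r)
            = (S 1).card * (i 0 / r) + β * ((S 0).card - i 0 / r) := by
          zify [hqle, hβs2]
          ring
        rw [hkey]
        exact Nat.add_le_add_left (Nat.mul_le_mul_right _ hβle) _
end

section
/- Let F ∈ F[X_1, X_2] be nonzero with leading monomial X_1^{i_1} X_2^{i_2} with respect to lex order with X_2 ≺ X_1, let |S_1| = s_1, |S_2| = s_2, and let 1 ≤ k ≤ r−1. If (r−k−1)s_1 ≤ i_1 < (r−k)·(r/(r+1))·s_1 and 0 ≤ i_2 < (k+1)s_2, then the number of points of S_1 × S_2 at which F has multiplicity at least r is at most s_2·(i_1/r) + (i_2/(k+1))·(s_1 − i_1/r). -/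
open MvPolynomial

namespace C3aux

variable {F : Type*} [CommRing F]

lemma fin2_finsupp_eq (k : Fin 2 →₀ ℕ) :
    k = Finsupp.single 0 (k 0) + Finsupp.single 1 (k 1) := by
  ext a
  fin_cases a <;> simp [Finsupp.single_apply]

lemma single_add_single_eq_iff (p q : ℕ) (k : Fin 2 →₀ ℕ) :
    Finsupp.single (0 : Fin 2) p + Finsupp.single 1 q = k ↔ p = k 0 ∧ q = k 1 := by
  constructor
  · intro h
    constructor
    · have := congrArg (fun g : Fin 2 →₀ ℕ => g 0) h
      simpa [Finsupp.single_apply] using this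
    · have := congrArg (fun g : Fin 2 →₀ ℕ => g 1) h
      simpa [Finsupp.single_apply] using this
  · rintro ⟨rfl, rfl⟩
    exact (fin2_finsupp_eq k).symm

lemma hd_add (k : Fin 2 →₀ ℕ) (f g : MvPolynomial (Fin 2) F) :
    hasseDeriv k (f + g) = hasseDeriv k f + hasseDeriv k g := by
  unfold hasseDeriv
  rw [eval₂_add, coeff_add]

lemma hd_monomial (k n : Fin 2 →₀ ℕ) (c : F) :
    hasseDeriv k (monomial n c) =
      ((n 0).choose (k 0) * (n 1).choose (k 1)) • monomial (n - k) c := by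
  unfold hasseDeriv
  rw [eval₂_monomial]
  rw [Finsupp.prod_fintype _ _ (fun i => pow_zero _), Fin.prod_univ_two]
  rw [add_pow, add_pow, Finset.sum_mul_sum, Finset.mul_sum]
  simp only [Finset.mul_sum]
  rw [coeff_sum]
  simp only [coeff_sum]
  have hterm : ∀ p q : ℕ,
      coeff k ((C.comp C) c *
        (X 0 ^ p * C (X 0) ^ (n 0 - p) * (((n 0).choose p : ℕ) : MvPolynomial (Fin 2) (MvPolynomial (Fin 2) F)) *
          (X 1 ^ q * C (X 1) ^ (n 1 - q) * (((n 1).choose q : ℕ) : MvPolynomial (Fin 2) (MvPolynomial (Fin 2) F))))) =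
      ((n 0).choose p * (n 1).choose q) •
        ((C c * X 0 ^ (n 0 - p) * X 1 ^ (n 1 - q)) *
          if Finsupp.single (0 : Fin 2) p + Finsupp.single 1 q = k then (1 : MvPolynomial (Fin 2) F) else 0) := by
    intro p q
    have heq : (C.comp C) c *
        (X 0 ^ p * C (X 0) ^ (n 0 - p) * (((n 0).choose p : ℕ) : MvPolynomial (Fin 2) (MvPolynomial (Fin 2) F)) *
          (X 1 ^ q * C (X 1) ^ (n 1 - q) * (((n 1).choose q : ℕ) : MvPolynomial (Fin 2) (MvPolynomial (Fin 2) F))))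
        = ((n 0).choose p * (n 1).choose q) •
            (C ((C c : MvPolynomial (Fin 2) F) * X 0 ^ (n 0 - p) * X 1 ^ (n 1 - q)) *
              monomial (Finsupp.single (0 : Fin 2) p + Finsupp.single 1 q)
                (1 : MvPolynomial (Fin 2) F)) := by
      rw [← one_mul (1 : MvPolynomial (Fin 2) F), ← monomial_mul,
        ← X_pow_eq_monomial, ← X_pow_eq_monomial]
      simp only [RingHom.comp_apply, map_mul, map_pow, nsmul_eq_mul, Nat.cast_mul]
      ring
    rw [heq, coeff_smul, coeff_C_mul, coeff_monomial]
  simp only [hterm]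
  by_cases h0 : k 0 ≤ n 0
  · by_cases h1 : k 1 ≤ n 1
    · rw [Finset.sum_eq_single_of_mem (k 0) (Finset.mem_range.mpr (by omega))]
      · rw [Finset.sum_eq_single_of_mem (k 1) (Finset.mem_range.mpr (by omega))]
        · rw [if_pos (fin2_finsupp_eq k).symm, mul_one]
          congr 1
          rw [monomial_eq, Finsupp.prod_fintype _ _ (fun i => pow_zero _), Fin.prod_univ_two,
            Finsupp.tsub_apply, Finsupp.tsub_apply, mul_assoc]
        · intro q hq hqne
          rw [if_neg, mul_zero, smul_zero]
          simp only [single_add_single_eq_iff, not_and]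
          intro _ h; exact hqne h
      · intro p hp hpne
        apply Finset.sum_eq_zero
        intro q hq
        rw [if_neg, mul_zero, smul_zero]
        simp only [single_add_single_eq_iff, not_and]
        intro h _; exact hpne h
    · rw [Nat.choose_eq_zero_of_lt (show n 1 < k 1 by omega), mul_zero, zero_smul]
      apply Finset.sum_eq_zero; intro p hp
      apply Finset.sum_eq_zero; intro q hq
      have hq' := Finset.mem_range.mp hq
      rw [if_neg, mul_zero, smul_zero]
      simp only [single_add_single_eq_iff, not_and]
      intro _ h; omega
  · rw [Nat.choose_eq_zero_of_lt (show n 0 < k 0 by omega), zero_mul, zero_smul]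
    apply Finset.sum_eq_zero; intro p hp
    apply Finset.sum_eq_zero; intro q hq
    have hp' := Finset.mem_range.mp hp
    rw [if_neg, mul_zero, smul_zero]
    simp only [single_add_single_eq_iff, not_and]
    intro h; omega

lemma hd_coeff (k d : Fin 2 →₀ ℕ) (f : MvPolynomial (Fin 2) F) :
    coeff d (hasseDeriv k f) =
      ((d 0 + k 0).choose (k 0) * (d 1 + k 1).choose (k 1)) • coeff (d + k) f := by
  induction f using MvPolynomial.induction_on' with
  | add p q hp hq => rw [hd_add, coeff_add, hp, hq, coeff_add, smul_add]
  | monomial n c =>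
    rw [hd_monomial, coeff_smul, coeff_monomial, coeff_monomial]
    by_cases h : n = d + k
    · subst h
      rw [if_pos, if_pos rfl]
      · simp [Finsupp.add_apply]
      · ext a; simp
    · rw [if_neg h, smul_zero]
      by_cases h2 : n - k = d
      · rw [if_pos h2]
        by_cases h3 : k 0 ≤ n 0
        · by_cases h4 : k 1 ≤ n 1
          · exfalso
            apply h
            have e0 := congrArg (fun g : Fin 2 →₀ ℕ => g 0) h2
            have e1 := congrArg (fun g : Fin 2 →₀ ℕ => g 1) h2
            simp only [Finsupp.tsub_apply] at e0 e1
            ext a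
            simp only [Finsupp.add_apply]
            fin_cases a
            · show n 0 = d 0 + k 0; omega
            · show n 1 = d 1 + k 1; omega
          · rw [Nat.choose_eq_zero_of_lt (show n 1 < k 1 by omega), mul_zero, zero_smul]
        · rw [Nat.choose_eq_zero_of_lt (show n 0 < k 0 by omega), zero_mul, zero_smul]
      · rw [if_neg h2, smul_zero]

lemma hd_comp (s j : ℕ) (f : MvPolynomial (Fin 2) F) :
    hasseDeriv (Finsupp.single 0 s) (hasseDeriv (Finsupp.single 1 j) f)
      = hasseDeriv (Finsupp.single 0 s + Finsupp.single 1 j) f := by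
  apply MvPolynomial.ext
  intro d
  rw [hd_coeff, hd_coeff, hd_coeff]
  simp only [Finsupp.single_apply, Finsupp.add_apply]
  norm_num
  rw [add_assoc]
  ring

/-- Restriction to the line `X 1 = b`. -/
noncomputable def resb (b : F) : MvPolynomial (Fin 2) F →+* Polynomial F :=
  MvPolynomial.eval₂Hom Polynomial.C (fun j => if j = 0 then Polynomial.X else Polynomial.C b)

lemma resb_monomial (b : F) (n : Fin 2 →₀ ℕ) (c : F) :
    resb b (monomial n c) = Polynomial.C (c * b ^ (n 1)) * Polynomial.X ^ (n 0) := by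
  unfold resb
  rw [eval₂Hom_monomial]
  rw [Finsupp.prod_fintype _ _ (fun i => pow_zero _), Fin.prod_univ_two]
  norm_num
  ring

lemma eval_resb (a b : F) (g : MvPolynomial (Fin 2) F) :
    (resb b g).eval a = MvPolynomial.eval ![a, b] g := by
  have : (Polynomial.evalRingHom a).comp (resb b) = MvPolynomial.eval ![a, b] := by
    apply MvPolynomial.ringHom_ext
    · intro c; simp [resb]
    · intro x; fin_cases x <;> simp [resb]
  exact DFunLike.congr_fun this g

lemma resb_hd (b : F) (s : ℕ) (g : MvPolynomial (Fin 2) F) :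
    resb b (hasseDeriv (Finsupp.single 0 s) g) = Polynomial.hasseDeriv s (resb b g) := by
  induction g using MvPolynomial.induction_on' with
  | add p q hp hq => rw [hd_add, map_add, hp, hq, map_add, map_add]
  | monomial n c =>
    rw [hd_monomial, map_nsmul, resb_monomial, resb_monomial,
      Polynomial.C_mul_X_pow_eq_monomial, Polynomial.C_mul_X_pow_eq_monomial,
      Polynomial.hasseDeriv_monomial]
    simp only [Finsupp.single_apply, Finsupp.tsub_apply]
    norm_num
    rw [← Polynomial.C_eq_natCast, Polynomial.C_mul_monomial]

lemma lex_le_0 {m i : Fin 2 →₀ ℕ} (h : toLex m ≤ toLex i) : m 0 ≤ i 0 := by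
  by_contra hc
  push_neg at hc
  have hlt : toLex i < toLex m := by
    show ∃ j, (∀ d, d < j → i d = m d) ∧ i j < m j
    refine ⟨0, fun j hj => absurd hj ?_, hc⟩
    rw [Fin.lt_def]
    omega
  exact (not_lt.mpr h) hlt

lemma lex_le_1 {m i : Fin 2 →₀ ℕ} (h : toLex m ≤ toLex i) (h0 : m 0 = i 0) : m 1 ≤ i 1 := by
  by_contra hc
  push_neg at hc
  have hlt : toLex i < toLex m := by
    show ∃ j, (∀ d, d < j → i d = m d) ∧ i j < m j
    refine ⟨1, fun j hj => ?_, hc⟩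
    have : j = 0 := by
      rw [Fin.lt_def] at hj
      apply Fin.ext
      have := j.isLt
      omega
    rw [this]
    exact h0.symm
  exact (not_lt.mpr h) hlt

/-- The top slice of `g` in the `X 0` direction at level `i0`, as a univariate
polynomial in `X 1`. -/
noncomputable def slice (i0 : ℕ) (g : MvPolynomial (Fin 2) F) : Polynomial F :=
  ∑ n ∈ g.support, if n 0 = i0 then Polynomial.C (coeff n g) * Polynomial.X ^ (n 1) else 0

lemma slice_coeff (i0 : ℕ) (g : MvPolynomial (Fin 2) F) (u : ℕ) :
    (slice i0 g).coeff u = coeff (Finsupp.single 0 i0 + Finsupp.single 1 u) g := by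
  classical
  unfold slice
  rw [Polynomial.finset_sum_coeff]
  have hcong : ∀ n ∈ g.support,
      ((if n 0 = i0 then Polynomial.C (coeff n g) * Polynomial.X ^ (n 1) else 0).coeff u)
        = if n = Finsupp.single 0 i0 + Finsupp.single 1 u then coeff n g else 0 := by
    intro n _
    by_cases h2 : n = Finsupp.single 0 i0 + Finsupp.single 1 u
    · rw [if_pos h2, if_pos (by rw [h2]; simp [Finsupp.single_apply]),
        Polynomial.coeff_C_mul, Polynomial.coeff_X_pow,
        if_pos (by rw [h2]; simp [Finsupp.single_apply]), mul_one]
    · rw [if_neg h2]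
      by_cases h1 : n 0 = i0
      · rw [if_pos h1, Polynomial.coeff_C_mul, Polynomial.coeff_X_pow, if_neg, mul_zero]
        intro hu
        exact h2 ((fin2_finsupp_eq n).trans (by rw [h1, ← hu]))
      · rw [if_neg h1, Polynomial.coeff_zero]
  rw [Finset.sum_congr rfl hcong, Finset.sum_ite_eq' g.support _ (fun n => coeff n g)]
  split_ifs with h
  · rfl
  · exact (MvPolynomial.notMem_support_iff.mp h).symm

lemma resb_coeff (b : F) (g : MvPolynomial (Fin 2) F) (t : ℕ) :
    (resb b g).coeff t = ∑ n ∈ g.support, (if n 0 = t then coeff n g * b ^ (n 1) else 0) := by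
  classical
  conv_lhs => rw [g.as_sum]
  rw [map_sum, Polynomial.finset_sum_coeff]
  apply Finset.sum_congr rfl
  intro n _
  rw [resb_monomial, Polynomial.coeff_C_mul, Polynomial.coeff_X_pow]
  by_cases h : n 0 = t
  · rw [if_pos h, if_pos h.symm, mul_one]
  · rw [if_neg (fun ht => h ht.symm), mul_zero, if_neg h]

lemma resb_natDegree_le (b : F) (g : MvPolynomial (Fin 2) F) (D : ℕ)
    (hg : ∀ n ∈ g.support, n 0 ≤ D) : (resb b g).natDegree ≤ D := by
  apply Polynomial.natDegree_le_iff_coeff_eq_zero.mpr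
  intro t ht
  rw [resb_coeff]
  apply Finset.sum_eq_zero
  intro n hn
  rw [if_neg]
  intro h
  have := hg n hn
  omega

lemma resb_coeff_top (b : F) (g : MvPolynomial (Fin 2) F) (D : ℕ) :
    (resb b g).coeff D = (slice D g).eval b := by
  classical
  rw [resb_coeff]
  unfold slice
  rw [Polynomial.eval_finset_sum]
  apply Finset.sum_congr rfl
  intro n hn
  split_ifs with h <;> simp

lemma slice_hd (i0 j : ℕ) (f : MvPolynomial (Fin 2) F) :
    slice i0 (hasseDeriv (Finsupp.single 1 j) f) = Polynomial.hasseDeriv j (slice i0 f) := by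
  apply Polynomial.ext
  intro u
  rw [Polynomial.hasseDeriv_coeff, slice_coeff, slice_coeff, hd_coeff]
  have harg : (Finsupp.single (0 : Fin 2) i0 + Finsupp.single 1 u) + Finsupp.single 1 j
      = Finsupp.single (0 : Fin 2) i0 + Finsupp.single 1 (u + j) := by
    ext a
    fin_cases a <;> simp [Finsupp.single_apply]
  rw [harg]
  simp [Finsupp.single_apply, nsmul_eq_mul]

lemma mult_vanish {f : MvPolynomial (Fin 2) F} {p : Fin 2 → F} {r : ℕ}
    (h : HasMultAtLeast f p r) {s j : ℕ} (hsj : s + j < r) :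
    MvPolynomial.eval p (hasseDeriv (Finsupp.single 0 s + Finsupp.single 1 j) f) = 0 := by
  apply h
  rw [Fin.sum_univ_two]
  simp [Finsupp.single_apply]
  omega

section Univariate

variable {K : Type*} [Field K]

lemma taylor_ne_zero' {p : Polynomial K} (hp : p ≠ 0) (b : K) : Polynomial.taylor b p ≠ 0 := by
  intro h
  apply hp
  apply Polynomial.taylor_injective b
  rw [h, map_zero]

lemma hasseDeriv_rootMult_ne_zero {p : Polynomial K} (hp : p ≠ 0) (b : K) :
    (Polynomial.hasseDeriv (p.rootMultiplicity b) p).eval b ≠ 0 := by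
  rw [← Polynomial.taylor_coeff]
  have h1 : p.rootMultiplicity b = (Polynomial.taylor b p).natTrailingDegree := by
    rw [Polynomial.rootMultiplicity_eq_natTrailingDegree, Polynomial.taylor_apply]
  rw [h1]
  exact Polynomial.coeff_natTrailingDegree_ne_zero.mpr (taylor_ne_zero' hp b)

lemma le_rootMultiplicity_of_hasse {q : Polynomial K} (hq : q ≠ 0) (a : K) (s : ℕ)
    (h : ∀ v < s, (Polynomial.hasseDeriv v q).eval a = 0) : s ≤ q.rootMultiplicity a := by
  rw [Polynomial.rootMultiplicity_eq_natTrailingDegree, ← Polynomial.taylor_apply]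
  apply Polynomial.le_natTrailingDegree (taylor_ne_zero' hq a)
  intro m hm
  rw [Polynomial.taylor_coeff]
  exact h m hm

lemma sum_rootMult_le (p : Polynomial K) (hp : p ≠ 0) (T : Finset K) :
    ∑ b ∈ T, p.rootMultiplicity b ≤ p.natDegree := by
  classical
  have h1 : ∀ b ∈ T, p.rootMultiplicity b = p.roots.count b := by
    intro b _
    rw [Polynomial.count_roots]
  rw [Finset.sum_congr rfl h1]
  have h2 : ∑ b ∈ T, p.roots.count b = ∑ b ∈ T.filter (· ∈ p.roots.toFinset), p.roots.count b := by
    symm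
    apply Finset.sum_filter_of_ne
    intro b _ hb
    rw [Multiset.mem_toFinset]
    exact Multiset.count_ne_zero.mp hb
  rw [h2]
  calc ∑ b ∈ T.filter (· ∈ p.roots.toFinset), p.roots.count b
      ≤ ∑ b ∈ p.roots.toFinset, p.roots.count b := by
        apply Finset.sum_le_sum_of_subset
        intro x hx
        exact (Finset.mem_filter.mp hx).2
    _ = Multiset.card p.roots := Multiset.toFinset_sum_count_eq p.roots
    _ ≤ p.natDegree := Polynomial.card_roots' p

end Univariate

end C3aux

set_option maxHeartbeats 1000000

/-- **case (C.3).** Let `f ∈ F[X_1,X_2]` be nonzero with leading monomial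
`X_1^{i_1} X_2^{i_2}` with respect to the lexicographic ordering with `X_2 ≺ X_1`, and let
`1 ≤ k ≤ r−1`. If `(r−k−1)·s_1 ≤ i_1 < (r−k)·(r/(r+1))·s_1` and `i_2 < (k+1)·s_2`, then the
number of points of `S_1 × S_2` at which `f` has multiplicity at least `r` is at most
`s_2·(i_1/r) + (i_2/(k+1))·(s_1 − i_1/r)` (as rational numbers). -/
theorem two_var_closed_formula_C3 {F : Type*} [Field F]
    (f : MvPolynomial (Fin 2) F) (hf : f ≠ 0) (i : Fin 2 →₀ ℕ)
    (hcoeff : MvPolynomial.coeff i f ≠ 0)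
    (hlead : ∀ j ∈ f.support, toLex j ≤ toLex i)
    (S : Fin 2 → Finset F) (r k : ℕ) (hk1 : 1 ≤ k) (hk2 : k ≤ r - 1)
    (h1 : ((r : ℚ) - k - 1) * (S 0).card ≤ (i 0 : ℚ))
    (h2 : (i 0 : ℚ) < ((r : ℚ) - k) * ((r : ℚ) / (r + 1)) * (S 0).card)
    (h3 : (i 1 : ℚ) < ((k : ℚ) + 1) * (S 1).card) :
    ({p : Fin 2 → F | p ∈ Fintype.piFinset S ∧ HasMultAtLeast f p r}.ncard : ℚ) ≤
      ((S 1).card : ℚ) * ((i 0 : ℚ) / r) +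
        ((i 1 : ℚ) / ((k : ℚ) + 1)) * (((S 0).card : ℚ) - (i 0 : ℚ) / r) := by
  classical
  open MvPolynomial C3aux in
  -- basic numeric facts
  have hr2 : 2 ≤ r := by omega
  -- the top slice of `f` in direction `X 0`
  set c : Polynomial F := C3aux.slice (i 0) f with hc_def
  have hc_coeff : c.coeff (i 1) = MvPolynomial.coeff i f := by
    rw [hc_def, C3aux.slice_coeff, ← C3aux.fin2_finsupp_eq]
  have hc_ne : c ≠ 0 := by
    intro h
    rw [h, Polynomial.coeff_zero] at hc_coeff
    exact hcoeff hc_coeff.symm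
  have hc_deg : c.natDegree ≤ i 1 := by
    apply Polynomial.natDegree_le_iff_coeff_eq_zero.mpr
    intro u hu
    rw [hc_def, C3aux.slice_coeff]
    by_contra hne
    have hmem := MvPolynomial.mem_support_iff.mpr hne
    have hle := hlead _ hmem
    have h0 : ((Finsupp.single (0 : Fin 2) (i 0) + Finsupp.single (1 : Fin 2) u : Fin 2 →₀ ℕ)) 0 = i 0 := by
      simp [Finsupp.single_apply]
    have h1' := C3aux.lex_le_1 hle h0
    simp [Finsupp.single_apply] at h1'
    omega
  -- root multiplicity of each `b` in the slice
  set m : F → ℕ := fun b => c.rootMultiplicity b with hm_def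
  have hm_sum : ∑ b ∈ S 1, m b ≤ i 1 :=
    le_trans (C3aux.sum_rootMult_le c hc_ne (S 1)) hc_deg
  -- columns
  set A : F → Finset F := fun b => (S 0).filter (fun a => HasMultAtLeast f ![a, b] r)
    with hA_def
  -- the key column-counting bound
  have key : ∀ b : F, m b < r → (A b).card * (r - m b) ≤ i 0 := by
    intro b hmb
    set j := m b with hj_def
    set g := hasseDeriv (Finsupp.single 1 j) f with hg_def
    have hsupp : ∀ n ∈ g.support, n 0 ≤ i 0 := by
      intro n hn
      have hne := MvPolynomial.mem_support_iff.mp hn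
      rw [hg_def, C3aux.hd_coeff] at hne
      have hne2 : MvPolynomial.coeff (n + Finsupp.single 1 j) f ≠ 0 := by
        intro h; rw [h, smul_zero] at hne; exact hne rfl
      have hle := hlead _ (MvPolynomial.mem_support_iff.mpr hne2)
      have := C3aux.lex_le_0 hle
      simpa [Finsupp.single_apply] using this
    set q : Polynomial F := C3aux.resb b g with hq_def
    have hq_top : q.coeff (i 0) = (Polynomial.hasseDeriv j c).eval b := by
      rw [hq_def, C3aux.resb_coeff_top, hg_def, hc_def, C3aux.slice_hd]
    have hq_ne : q ≠ 0 := by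
      intro h
      apply C3aux.hasseDeriv_rootMult_ne_zero hc_ne b
      show Polynomial.eval b ((Polynomial.hasseDeriv j) c) = 0
      rw [← hq_top, h, Polynomial.coeff_zero]
    have hq_deg : q.natDegree ≤ i 0 := C3aux.resb_natDegree_le b g (i 0) hsupp
    have hroot : ∀ a ∈ A b, r - j ≤ q.rootMultiplicity a := by
      intro a ha
      have hmult : HasMultAtLeast f ![a, b] r := (Finset.mem_filter.mp ha).2
      apply C3aux.le_rootMultiplicity_of_hasse hq_ne
      intro v hv
      rw [hq_def, ← C3aux.resb_hd, hg_def, C3aux.hd_comp, C3aux.eval_resb]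
      exact C3aux.mult_vanish hmult (by omega)
    calc (A b).card * (r - j) = ∑ _a ∈ A b, (r - j) := by
            rw [Finset.sum_const, smul_eq_mul]
      _ ≤ ∑ a ∈ A b, q.rootMultiplicity a := Finset.sum_le_sum hroot
      _ ≤ q.natDegree := C3aux.sum_rootMult_le q hq_ne (A b)
      _ ≤ i 0 := hq_deg
  -- cardinality of the bad set
  have hset : {p : Fin 2 → F | p ∈ Fintype.piFinset S ∧ HasMultAtLeast f p r}
      = ↑((Fintype.piFinset S).filter (fun p => HasMultAtLeast f p r)) := by
    ext p
    simp [Set.mem_setOf_eq, Finset.mem_filter]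
  have hcard : ((Fintype.piFinset S).filter (fun p => HasMultAtLeast f p r)).card
      = ∑ b ∈ S 1, (A b).card := by
    have hbij : ((Fintype.piFinset S).filter (fun p => HasMultAtLeast f p r)).card
        = ((S 0 ×ˢ S 1).filter (fun ab => HasMultAtLeast f ![ab.1, ab.2] r)).card := by
      apply Finset.card_bij (fun p _ => (p 0, p 1))
      · intro p hp
        obtain ⟨hp1, hp2⟩ := Finset.mem_filter.mp hp
        have hpi := Fintype.mem_piFinset.mp hp1
        have hpe : ![p 0, p 1] = p := by
          funext x; fin_cases x <;> rfl
        refine Finset.mem_filter.mpr ⟨Finset.mem_product.mpr ⟨hpi 0, hpi 1⟩, ?_⟩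
        simpa [hpe] using hp2
      · intro p1 hp1 p2 hp2 he
        funext x
        have h0 := congrArg Prod.fst he
        have h1 := congrArg Prod.snd he
        fin_cases x
        · exact h0
        · exact h1
      · intro ab hab
        obtain ⟨hab1, hab2⟩ := Finset.mem_filter.mp hab
        obtain ⟨ha, hb⟩ := Finset.mem_product.mp hab1
        refine ⟨![ab.1, ab.2], Finset.mem_filter.mpr ⟨?_, hab2⟩, ?_⟩
        · apply Fintype.mem_piFinset.mpr
          intro x; fin_cases x <;> simpa
        · simp
    rw [hbij, Finset.card_filter, Finset.sum_product_right]
    apply Finset.sum_congr rfl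
    intro b _
    rw [hA_def, Finset.card_filter]
  rw [hset, Set.ncard_coe_finset, hcard]
  -- now pure rational arithmetic
  have hR : (0:ℚ) < (r:ℚ) := by exact_mod_cast (show 0 < r by omega)
  have hK1 : (0:ℚ) < (k:ℚ) + 1 := by positivity
  have hs0 : (0:ℚ) ≤ ((S 0).card : ℚ) := by positivity
  have hI0 : (0:ℚ) ≤ (i 0 : ℚ) := by positivity
  have hKR : (k:ℚ) + 1 ≤ (r:ℚ) := by exact_mod_cast (show k + 1 ≤ r by omega)
  have hirs : (i 0 : ℚ) * ((r:ℚ) + 1) ≤ ((r:ℚ) - k) * (r:ℚ) * ((S 0).card : ℚ) := by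
    have hR1 : (0:ℚ) < (r:ℚ) + 1 := by positivity
    have hmul := mul_lt_mul_of_pos_right h2 hR1
    have heq : ((r:ℚ) - k) * ((r:ℚ)/((r:ℚ)+1)) * ((S 0).card : ℚ) * ((r:ℚ)+1)
        = ((r:ℚ) - k) * (r:ℚ) * ((S 0).card : ℚ) := by
      field_simp
    linarith [hmul, heq.le]
  have hI0R : (i 0 : ℚ) / r ≤ ((S 0).card : ℚ) := by
    rw [div_le_iff₀ hR]
    nlinarith [hirs, hKR, hI0, hs0, hR]
  have hslope : (0:ℚ) ≤ ((S 0).card : ℚ) - (i 0 : ℚ)/r := by linarith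
  have hcol : ∀ b ∈ S 1, ((A b).card : ℚ) ≤
      (i 0 : ℚ)/r + (m b : ℚ)/((k:ℚ)+1) * (((S 0).card : ℚ) - (i 0 : ℚ)/r) := by
    intro b _
    by_cases hmb : m b ≤ k
    · have hnat := key b (by omega)
      have hle : m b ≤ r := by omega
      have hcast : ((A b).card : ℚ) * ((r:ℚ) - (m b : ℚ)) ≤ (i 0 : ℚ) := by
        calc ((A b).card : ℚ) * ((r:ℚ) - (m b:ℚ)) = (((A b).card * (r - m b) : ℕ) : ℚ) := by
              push_cast [Nat.cast_sub hle]; ring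
          _ ≤ (i 0 : ℚ) := by exact_mod_cast hnat
      have hw0 : (0:ℚ) ≤ ((A b).card : ℚ) := by positivity
      have hM0 : (0:ℚ) ≤ (m b : ℚ) := by positivity
      have hMk : (m b : ℚ) ≤ (k:ℚ) := by exact_mod_cast hmb
      have e1 : ((A b).card : ℚ) * ((r:ℚ) - k) ≤ (i 0 : ℚ) := by
        nlinarith [hcast, hMk, hw0]
      have e2 : (i 0:ℚ) * ((k:ℚ)+1) ≤ ((r:ℚ) - k) * ((r:ℚ) * ((S 0).card : ℚ) - (i 0:ℚ)) := by
        nlinarith [hirs]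
      have hRK1 : (1:ℚ) ≤ (r:ℚ) - k := by linarith
      have e3 : ((A b).card : ℚ) * ((k:ℚ)+1) ≤ (r:ℚ) * ((S 0).card : ℚ) - (i 0:ℚ) := by
        nlinarith [mul_le_mul_of_nonneg_right e1 hK1.le, e2, hRK1, hw0, hK1.le]
      have hgoal : (i 0:ℚ)/r + (m b:ℚ)/((k:ℚ)+1) * (((S 0).card : ℚ) - (i 0:ℚ)/r)
          = ((i 0:ℚ)*((k:ℚ)+1) + (m b:ℚ)*((r:ℚ)*((S 0).card : ℚ) - (i 0:ℚ)))
            / ((r:ℚ)*((k:ℚ)+1)) := by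
        field_simp
      rw [hgoal, le_div_iff₀ (by positivity)]
      nlinarith [mul_le_mul_of_nonneg_right hcast hK1.le,
        mul_le_mul_of_nonneg_left e3 hM0]
    · have hw : ((A b).card : ℚ) ≤ ((S 0).card : ℚ) := by
        exact_mod_cast Nat.cast_le.mpr (Finset.card_filter_le (S 0) _)
      have hM : (k:ℚ)+1 ≤ (m b : ℚ) := by exact_mod_cast (show k+1 ≤ m b by omega)
      have h1M : 1 ≤ (m b : ℚ)/((k:ℚ)+1) := (one_le_div hK1).mpr hM
      nlinarith [mul_le_mul_of_nonneg_right h1M hslope, hw, hI0R]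
  have hsum' : (∑ b ∈ S 1, (m b : ℚ)) ≤ (i 1 : ℚ) := by
    have h : ((∑ b ∈ S 1, m b : ℕ) : ℚ) ≤ ((i 1 : ℕ) : ℚ) := Nat.cast_le.mpr hm_sum
    rw [Nat.cast_sum] at h
    exact h
  calc ((∑ b ∈ S 1, (A b).card : ℕ) : ℚ) = ∑ b ∈ S 1, ((A b).card : ℚ) := by
        rw [Nat.cast_sum]
    _ ≤ ∑ b ∈ S 1, ((i 0:ℚ)/r + (m b:ℚ)/((k:ℚ)+1) * (((S 0).card : ℚ) - (i 0:ℚ)/r)) :=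
        Finset.sum_le_sum hcol
    _ = ((S 1).card : ℚ) * ((i 0:ℚ)/r)
        + (∑ b ∈ S 1, (m b:ℚ)) * ((((S 0).card : ℚ) - (i 0:ℚ)/r)/((k:ℚ)+1)) := by
        rw [Finset.sum_add_distrib, Finset.sum_const, nsmul_eq_mul, ← Finset.sum_mul]
        congr 1
        rw [← Finset.sum_div]
        ring
    _ ≤ ((S 1).card : ℚ) * ((i 0:ℚ)/r)
        + (i 1 : ℚ) * ((((S 0).card : ℚ) - (i 0:ℚ)/r)/((k:ℚ)+1)) := by
        have hY : (0:ℚ) ≤ (((S 0).card : ℚ) - (i 0:ℚ)/r)/((k:ℚ)+1) := by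
          apply div_nonneg hslope hK1.le
        exact add_le_add_right (mul_le_mul_of_nonneg_right hsum' hY) _
    _ = ((S 1).card : ℚ) * ((i 0:ℚ)/r)
        + (i 1 : ℚ) / ((k:ℚ)+1) * (((S 0).card : ℚ) - (i 0:ℚ)/r) := by
        ring
end
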